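/- arXiv:1103.3995 — 4 statements merged into one kernel-verified Lean document; each statement's English description precedes it below -/
import Mathlib

section
/- Let F : ℝ² → ℝ be a continuous biperiodic function, and let p, p̃ be twice continuously differentiable biperiodic functions such that the functions P(u,v) = ½(u² + v²) + p(u,v) and P̃(u,v) = ½(u² + v²) + p̃(u,v) both satisfy the Monge–Ampère equation P_uu P_vv − P_uv² = e^F on ℝ² and both satisfy the positivity condition P_uu + P_vv > 0 (respectively P̃_uu + P̃_vv > 0) everywhere. Then p − p̃ is a constant function. -/
open MeasureTheory

/-- Partial derivative in the first variable. -/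
noncomputable def pdx (p : ℝ × ℝ → ℝ) (z : ℝ × ℝ) : ℝ := fderiv ℝ p z (1, 0)

/-- Partial derivative in the second variable. -/
noncomputable def pdy (p : ℝ × ℝ → ℝ) (z : ℝ × ℝ) : ℝ := fderiv ℝ p z (0, 1)

/-- A function `ℝ² → ℝ` is biperiodic if it has period 1 in each variable. -/
def Biperiodic (p : ℝ × ℝ → ℝ) : Prop :=
  ∀ x y : ℝ, p (x + 1, y) = p (x, y) ∧ p (x, y + 1) = p (x, y)

/-- The integral over the torus `𝕋² = ℝ²/ℤ²` of (the descent of) a biperiodic function. -/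
noncomputable def torusInt (f : ℝ × ℝ → ℝ) : ℝ := ∫ x in (0:ℝ)..1, ∫ y in (0:ℝ)..1, f (x, y)

lemma pdx_contDiff {f : ℝ × ℝ → ℝ} {n : ℕ} (hf : ContDiff ℝ (n+1) f) :
    ContDiff ℝ n (pdx f) := by
  have h := hf.fderiv_right (m := n) (by norm_cast)
  exact h.clm_apply contDiff_const

lemma pdy_contDiff {f : ℝ × ℝ → ℝ} {n : ℕ} (hf : ContDiff ℝ (n+1) f) :
    ContDiff ℝ n (pdy f) := by
  have h := hf.fderiv_right (m := n) (by norm_cast)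
  exact h.clm_apply contDiff_const

lemma biperiodic_iff {f : ℝ × ℝ → ℝ} :
    Biperiodic f ↔ ∀ z : ℝ × ℝ, f (z + (1,0)) = f z ∧ f (z + (0,1)) = f z := by
  constructor
  · intro h z
    have := h z.1 z.2
    constructor
    · have hz : z + ((1:ℝ),(0:ℝ)) = (z.1 + 1, z.2) := by
        simp [Prod.ext_iff]
      rw [hz]; exact this.1
    · have hz : z + ((0:ℝ),(1:ℝ)) = (z.1, z.2 + 1) := by
        simp [Prod.ext_iff]
      rw [hz]; exact this.2
  · intro h x y
    have h1 := (h (x, y)).1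
    have h2 := (h (x, y)).2
    have e1 : (x, y) + ((1:ℝ),(0:ℝ)) = (x + 1, y) := by simp [Prod.ext_iff]
    have e2 : (x, y) + ((0:ℝ),(1:ℝ)) = (x, y + 1) := by simp [Prod.ext_iff]
    rw [e1] at h1; rw [e2] at h2
    exact ⟨h1, h2⟩

lemma fderiv_periodic_shift {f : ℝ × ℝ → ℝ} (hf : Differentiable ℝ f) {e : ℝ × ℝ}
    (hsh : ∀ z, f (z + e) = f z) (z : ℝ × ℝ) :
    fderiv ℝ f (z + e) = fderiv ℝ f z := by
  have h1 : HasFDerivAt (fun w : ℝ × ℝ => f (w + e)) ((fderiv ℝ f (z + e)).comp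
      (ContinuousLinearMap.id ℝ (ℝ × ℝ))) z :=
    (hf (z + e)).hasFDerivAt.comp z ((hasFDerivAt_id z).add_const e)
  have h2 : (fun w : ℝ × ℝ => f (w + e)) = f := funext hsh
  rw [h2, ContinuousLinearMap.comp_id] at h1
  exact h1.fderiv.symm

lemma Biperiodic.pdx {f : ℝ × ℝ → ℝ} (hper : Biperiodic f) (hf : Differentiable ℝ f) :
    Biperiodic (pdx f) := by
  rw [biperiodic_iff] at hper ⊢
  intro z
  constructor
  · unfold _root_.pdx
    rw [fderiv_periodic_shift hf (fun z => (hper z).1) z]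
  · unfold _root_.pdx
    rw [fderiv_periodic_shift hf (fun z => (hper z).2) z]

lemma Biperiodic.pdy {f : ℝ × ℝ → ℝ} (hper : Biperiodic f) (hf : Differentiable ℝ f) :
    Biperiodic (pdy f) := by
  rw [biperiodic_iff] at hper ⊢
  intro z
  constructor
  · unfold _root_.pdy
    rw [fderiv_periodic_shift hf (fun z => (hper z).1) z]
  · unfold _root_.pdy
    rw [fderiv_periodic_shift hf (fun z => (hper z).2) z]

lemma hasDerivAt_x {f : ℝ × ℝ → ℝ} (hf : Differentiable ℝ f) (a b t : ℝ) :
    HasDerivAt (fun s => f (a + s, b)) (pdx f (a + t, b)) t := by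
  have hc : HasDerivAt (fun s : ℝ => (a + s, b)) ((1:ℝ), (0:ℝ)) t := by
    have h1 : HasDerivAt (fun s : ℝ => a + s) (1:ℝ) t := by
      simpa using (hasDerivAt_id t).const_add a
    exact h1.prodMk (hasDerivAt_const t b)
  exact (hf (a + t, b)).hasFDerivAt.comp_hasDerivAt t hc

lemma hasDerivAt_y {f : ℝ × ℝ → ℝ} (hf : Differentiable ℝ f) (a b t : ℝ) :
    HasDerivAt (fun s => f (a, b + s)) (pdy f (a, b + t)) t := by
  have hc : HasDerivAt (fun s : ℝ => (a, b + s)) ((0:ℝ), (1:ℝ)) t := by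
    have h1 : HasDerivAt (fun s : ℝ => b + s) (1:ℝ) t := by
      simpa using (hasDerivAt_id t).const_add b
    exact (hasDerivAt_const t a).prodMk h1
  exact (hf (a, b + t)).hasFDerivAt.comp_hasDerivAt t hc

lemma ftc_x {f : ℝ × ℝ → ℝ} (hf : Differentiable ℝ f) (hc : Continuous (pdx f))
    (a b u v : ℝ) : ∫ t in u..v, pdx f (a + t, b) = f (a + v, b) - f (a + u, b) := by
  refine intervalIntegral.integral_eq_sub_of_hasDerivAt (fun t _ => hasDerivAt_x hf a b t) ?_
  exact (hc.comp (by continuity)).intervalIntegrable u v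

lemma ftc_y {f : ℝ × ℝ → ℝ} (hf : Differentiable ℝ f) (hc : Continuous (pdy f))
    (a b u v : ℝ) : ∫ t in u..v, pdy f (a, b + t) = f (a, b + v) - f (a, b + u) := by
  refine intervalIntegral.integral_eq_sub_of_hasDerivAt (fun t _ => hasDerivAt_y hf a b t) ?_
  exact (hc.comp (by continuity)).intervalIntegrable u v

lemma key_u {f : ℝ × ℝ → ℝ} (hf : ContDiff ℝ 2 f) (z : ℝ × ℝ) {h ε : ℝ} (hh : 0 < h)
    (hε : ∀ w : ℝ × ℝ, |w.1 - z.1| ≤ h → |w.2 - z.2| ≤ h →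
      |pdx (pdx f) w - pdx (pdx f) z| ≤ ε) :
    |(f (z.1 + h, z.2) - 2 * f z + f (z.1 - h, z.2)) / h ^ 2 - pdx (pdx f) z| ≤ ε := by
  have hd : Differentiable ℝ f := hf.differentiable (by norm_num)
  have h1 : ContDiff ℝ 1 (pdx f) := pdx_contDiff (n := 1) (by exact_mod_cast hf)
  have hdx : Differentiable ℝ (pdx f) := h1.differentiable (by norm_num)
  have hcx : Continuous (pdx f) := h1.continuous
  have hcxx : Continuous (pdx (pdx f)) := (pdx_contDiff (n := 0) (by exact_mod_cast h1)).continuous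
  set a := pdx (pdx f) with ha
  set φ : ℝ → ℝ := fun t => pdx f (z.1 + t, z.2) with hφ
  have hφc : Continuous φ := by fun_prop
  -- first differences
  have E1 : ∫ t in (0:ℝ)..h, φ t = f (z.1 + h, z.2) - f z := by
    rw [ftc_x hd hcx z.1 z.2 0 h]
    simp
  have E2 : ∫ t in (-h)..(0:ℝ), φ t = f z - f (z.1 - h, z.2) := by
    rw [ftc_x hd hcx z.1 z.2 (-h) 0]
    simp [sub_eq_add_neg]
  -- shifted integral
  have E4 : ∫ t in (0:ℝ)..h, φ (t - h) = ∫ t in (-h)..(0:ℝ), φ t := by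
    rw [intervalIntegral.integral_comp_sub_right φ h]
    norm_num
  -- second difference as double integral
  have E3 : ∀ t : ℝ, φ t - φ (t - h) = ∫ s in (0:ℝ)..h, a (z.1 + (t - h + s), z.2) := by
    intro t
    have := ftc_x hdx hcxx z.1 z.2 (t - h) t
    have E3' : ∫ s in (0:ℝ)..h, a (z.1 + (t - h + s), z.2)
        = ∫ s in (t-h)..t, a (z.1 + s, z.2) := by
      have := intervalIntegral.integral_comp_add_left
        (a := (0:ℝ)) (b := h) (fun s => a (z.1 + s, z.2)) (t - h)
      rw [this]
      norm_num
    rw [E3', this]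
  set N : ℝ := f (z.1 + h, z.2) - 2 * f z + f (z.1 - h, z.2) with hN
  have hφsc : Continuous fun t : ℝ => φ (t - h) := hφc.comp (continuous_id.sub continuous_const)
  have E5 : N = ∫ t in (0:ℝ)..h, (φ t - φ (t - h)) := by
    have hs := intervalIntegral.integral_sub (f := φ) (g := fun t => φ (t - h))
      (hφc.intervalIntegrable (μ := MeasureTheory.volume) 0 h) (hφsc.intervalIntegrable 0 h)
    rw [hs, E4, E1, E2]
    ring
  have hg : Continuous fun w : ℝ × ℝ => a (z.1 + (w.1 - h + w.2), z.2) := by fun_prop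
  have F1cont : Continuous fun t : ℝ => ∫ s in (0:ℝ)..h, a (z.1 + (t - h + s), z.2) := by
    exact intervalIntegral.continuous_parametric_intervalIntegral_of_continuous'
      (f := fun t s => a (z.1 + (t - h + s), z.2)) (by exact hg) 0 h
  have E6 : N - h ^ 2 * a z
      = ∫ t in (0:ℝ)..h, ∫ s in (0:ℝ)..h, (a (z.1 + (t - h + s), z.2) - a z) := by
    have inner_eq : ∀ t : ℝ, ∫ s in (0:ℝ)..h, (a (z.1 + (t - h + s), z.2) - a z)
        = (∫ s in (0:ℝ)..h, a (z.1 + (t - h + s), z.2)) - h * a z := by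
      intro t
      have hc1 : Continuous fun s : ℝ => a (z.1 + (t - h + s), z.2) := by fun_prop
      have hs := intervalIntegral.integral_sub (f := fun s => a (z.1 + (t - h + s), z.2))
        (g := fun _ => a z) (hc1.intervalIntegrable (μ := MeasureTheory.volume) 0 h)
        ((continuous_const (y := a z)).intervalIntegrable 0 h)
      rw [hs]
      simp
    rw [intervalIntegral.integral_congr (g := fun t =>
      (∫ s in (0:ℝ)..h, a (z.1 + (t - h + s), z.2)) - h * a z) (fun t _ => inner_eq t)]
    have hs2 := intervalIntegral.integral_sub
      (f := fun t => ∫ s in (0:ℝ)..h, a (z.1 + (t - h + s), z.2)) (g := fun _ => h * a z)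
      (F1cont.intervalIntegrable (μ := MeasureTheory.volume) 0 h) ((continuous_const (y := h * a z)).intervalIntegrable 0 h)
    rw [hs2]
    have : ∫ t in (0:ℝ)..h, (φ t - φ (t - h)) = ∫ t in (0:ℝ)..h,
        ∫ s in (0:ℝ)..h, a (z.1 + (t - h + s), z.2) :=
      intervalIntegral.integral_congr (fun t _ => E3 t)
    rw [← this, ← E5]
    simp
    ring
  have bound : |N - h ^ 2 * a z| ≤ ε * h ^ 2 := by
    rw [E6]
    have outer : ∀ t ∈ Set.uIoc (0:ℝ) h,
        ‖∫ s in (0:ℝ)..h, (a (z.1 + (t - h + s), z.2) - a z)‖ ≤ ε * h := by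
      intro t ht
      rw [Set.uIoc_of_le hh.le] at ht
      have inner : ∀ s ∈ Set.uIoc (0:ℝ) h, ‖a (z.1 + (t - h + s), z.2) - a z‖ ≤ ε := by
        intro s hs
        rw [Set.uIoc_of_le hh.le] at hs
        apply hε
        · simp only []
          rw [add_sub_cancel_left]
          rw [abs_le]
          constructor <;> [linarith [ht.1, hs.1]; linarith [ht.2, hs.2]]
        · simp only [sub_self, abs_zero]
          exact hh.le
      calc ‖∫ s in (0:ℝ)..h, (a (z.1 + (t - h + s), z.2) - a z)‖
          ≤ ε * |h - 0| := intervalIntegral.norm_integral_le_of_norm_le_const inner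
        _ = ε * h := by rw [sub_zero, abs_of_pos hh]
    calc |∫ t in (0:ℝ)..h, ∫ s in (0:ℝ)..h, (a (z.1 + (t - h + s), z.2) - a z)|
        ≤ (ε * h) * |h - 0| := intervalIntegral.norm_integral_le_of_norm_le_const outer
      _ = ε * h ^ 2 := by rw [sub_zero, abs_of_pos hh]; ring
  have hh2 : (0:ℝ) < h ^ 2 := by positivity
  have : (N / h ^ 2 - a z) = (N - h ^ 2 * a z) / h ^ 2 := by field_simp
  rw [this, abs_div, abs_of_pos hh2, div_le_iff₀ hh2]
  linarith [bound]

lemma key_v {f : ℝ × ℝ → ℝ} (hf : ContDiff ℝ 2 f) (z : ℝ × ℝ) {h ε : ℝ} (hh : 0 < h)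
    (hε : ∀ w : ℝ × ℝ, |w.1 - z.1| ≤ h → |w.2 - z.2| ≤ h →
      |pdy (pdy f) w - pdy (pdy f) z| ≤ ε) :
    |(f (z.1, z.2 + h) - 2 * f z + f (z.1, z.2 - h)) / h ^ 2 - pdy (pdy f) z| ≤ ε := by
  have hd : Differentiable ℝ f := hf.differentiable (by norm_num)
  have h1 : ContDiff ℝ 1 (pdy f) := pdy_contDiff (n := 1) (by exact_mod_cast hf)
  have hdx : Differentiable ℝ (pdy f) := h1.differentiable (by norm_num)
  have hcx : Continuous (pdy f) := h1.continuous
  have hcxx : Continuous (pdy (pdy f)) := (pdy_contDiff (n := 0) (by exact_mod_cast h1)).continuous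
  set a := pdy (pdy f) with ha
  set φ : ℝ → ℝ := fun t => pdy f (z.1, z.2 + t) with hφ
  have hφc : Continuous φ := by fun_prop
  -- first differences
  have E1 : ∫ t in (0:ℝ)..h, φ t = f (z.1, z.2 + h) - f z := by
    rw [ftc_y hd hcx z.1 z.2 0 h]
    simp
  have E2 : ∫ t in (-h)..(0:ℝ), φ t = f z - f (z.1, z.2 - h) := by
    rw [ftc_y hd hcx z.1 z.2 (-h) 0]
    simp [sub_eq_add_neg]
  -- shifted integral
  have E4 : ∫ t in (0:ℝ)..h, φ (t - h) = ∫ t in (-h)..(0:ℝ), φ t := by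
    rw [intervalIntegral.integral_comp_sub_right φ h]
    norm_num
  -- second difference as double integral
  have E3 : ∀ t : ℝ, φ t - φ (t - h) = ∫ s in (0:ℝ)..h, a (z.1, z.2 + (t - h + s)) := by
    intro t
    have := ftc_y hdx hcxx z.1 z.2 (t - h) t
    have E3' : ∫ s in (0:ℝ)..h, a (z.1, z.2 + (t - h + s))
        = ∫ s in (t-h)..t, a (z.1, z.2 + s) := by
      have := intervalIntegral.integral_comp_add_left
        (a := (0:ℝ)) (b := h) (fun s => a (z.1, z.2 + s)) (t - h)
      rw [this]
      norm_num
    rw [E3', this]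
  set N : ℝ := f (z.1, z.2 + h) - 2 * f z + f (z.1, z.2 - h) with hN
  have hφsc : Continuous fun t : ℝ => φ (t - h) := hφc.comp (continuous_id.sub continuous_const)
  have E5 : N = ∫ t in (0:ℝ)..h, (φ t - φ (t - h)) := by
    have hs := intervalIntegral.integral_sub (f := φ) (g := fun t => φ (t - h))
      (hφc.intervalIntegrable (μ := MeasureTheory.volume) 0 h) (hφsc.intervalIntegrable 0 h)
    rw [hs, E4, E1, E2]
    ring
  have hg : Continuous fun w : ℝ × ℝ => a (z.1, z.2 + (w.1 - h + w.2)) := by fun_prop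
  have F1cont : Continuous fun t : ℝ => ∫ s in (0:ℝ)..h, a (z.1, z.2 + (t - h + s)) := by
    exact intervalIntegral.continuous_parametric_intervalIntegral_of_continuous'
      (f := fun t s => a (z.1, z.2 + (t - h + s))) (by exact hg) 0 h
  have E6 : N - h ^ 2 * a z
      = ∫ t in (0:ℝ)..h, ∫ s in (0:ℝ)..h, (a (z.1, z.2 + (t - h + s)) - a z) := by
    have inner_eq : ∀ t : ℝ, ∫ s in (0:ℝ)..h, (a (z.1, z.2 + (t - h + s)) - a z)
        = (∫ s in (0:ℝ)..h, a (z.1, z.2 + (t - h + s))) - h * a z := by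
      intro t
      have hc1 : Continuous fun s : ℝ => a (z.1, z.2 + (t - h + s)) := by fun_prop
      have hs := intervalIntegral.integral_sub (f := fun s => a (z.1, z.2 + (t - h + s)))
        (g := fun _ => a z) (hc1.intervalIntegrable (μ := MeasureTheory.volume) 0 h)
        ((continuous_const (y := a z)).intervalIntegrable 0 h)
      rw [hs]
      simp
    rw [intervalIntegral.integral_congr (g := fun t =>
      (∫ s in (0:ℝ)..h, a (z.1, z.2 + (t - h + s))) - h * a z) (fun t _ => inner_eq t)]
    have hs2 := intervalIntegral.integral_sub
      (f := fun t => ∫ s in (0:ℝ)..h, a (z.1, z.2 + (t - h + s))) (g := fun _ => h * a z)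
      (F1cont.intervalIntegrable (μ := MeasureTheory.volume) 0 h) ((continuous_const (y := h * a z)).intervalIntegrable 0 h)
    rw [hs2]
    have : ∫ t in (0:ℝ)..h, (φ t - φ (t - h)) = ∫ t in (0:ℝ)..h,
        ∫ s in (0:ℝ)..h, a (z.1, z.2 + (t - h + s)) :=
      intervalIntegral.integral_congr (fun t _ => E3 t)
    rw [← this, ← E5]
    simp
    ring
  have bound : |N - h ^ 2 * a z| ≤ ε * h ^ 2 := by
    rw [E6]
    have outer : ∀ t ∈ Set.uIoc (0:ℝ) h,
        ‖∫ s in (0:ℝ)..h, (a (z.1, z.2 + (t - h + s)) - a z)‖ ≤ ε * h := by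
      intro t ht
      rw [Set.uIoc_of_le hh.le] at ht
      have inner : ∀ s ∈ Set.uIoc (0:ℝ) h, ‖a (z.1, z.2 + (t - h + s)) - a z‖ ≤ ε := by
        intro s hs
        rw [Set.uIoc_of_le hh.le] at hs
        apply hε
        · simp only [sub_self, abs_zero]
          exact hh.le
        · simp only []
          rw [add_sub_cancel_left]
          rw [abs_le]
          constructor <;> [linarith [ht.1, hs.1]; linarith [ht.2, hs.2]]
      calc ‖∫ s in (0:ℝ)..h, (a (z.1, z.2 + (t - h + s)) - a z)‖
          ≤ ε * |h - 0| := intervalIntegral.norm_integral_le_of_norm_le_const inner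
        _ = ε * h := by rw [sub_zero, abs_of_pos hh]
    calc |∫ t in (0:ℝ)..h, ∫ s in (0:ℝ)..h, (a (z.1, z.2 + (t - h + s)) - a z)|
        ≤ (ε * h) * |h - 0| := intervalIntegral.norm_integral_le_of_norm_le_const outer
      _ = ε * h ^ 2 := by rw [sub_zero, abs_of_pos hh]; ring
  have hh2 : (0:ℝ) < h ^ 2 := by positivity
  have : (N / h ^ 2 - a z) = (N - h ^ 2 * a z) / h ^ 2 := by field_simp
  rw [this, abs_div, abs_of_pos hh2, div_le_iff₀ hh2]
  linarith [bound]

lemma key_m {f : ℝ × ℝ → ℝ} (hf : ContDiff ℝ 2 f) (z : ℝ × ℝ) {h ε : ℝ} (hh : 0 < h)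
    (hε : ∀ w : ℝ × ℝ, |w.1 - z.1| ≤ h → |w.2 - z.2| ≤ h →
      |pdy (pdx f) w - pdy (pdx f) z| ≤ ε) :
    |(f (z.1 + h/2, z.2 + h/2) - f (z.1 + h/2, z.2 - h/2) - f (z.1 - h/2, z.2 + h/2)
      + f (z.1 - h/2, z.2 - h/2)) / h ^ 2 - pdy (pdx f) z| ≤ ε := by
  have hd : Differentiable ℝ f := hf.differentiable (by norm_num)
  have h1 : ContDiff ℝ 1 (pdx f) := pdx_contDiff (n := 1) (by exact_mod_cast hf)
  have hdx : Differentiable ℝ (pdx f) := h1.differentiable (by norm_num)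
  have hcx : Continuous (pdx f) := h1.continuous
  have hb : Continuous (pdy (pdx f)) := (pdy_contDiff (n := 0) (by exact_mod_cast h1)).continuous
  set b := pdy (pdx f) with hbdef
  set A := z.1 - h/2 with hA
  set B := z.2 - h/2 with hB
  set Φ : ℝ → ℝ := fun s => f (A + s, B + h) - f (A + s, B) with hΦ
  have hΦ' : ∀ s : ℝ, HasDerivAt Φ (pdx f (A + s, B + h) - pdx f (A + s, B)) s :=
    fun s => (hasDerivAt_x hd A (B + h) s).sub (hasDerivAt_x hd A B s)
  have hψc : Continuous fun s : ℝ => pdx f (A + s, B + h) - pdx f (A + s, B) := by fun_prop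
  have E1 : ∫ s in (0:ℝ)..h, (pdx f (A + s, B + h) - pdx f (A + s, B)) = Φ h - Φ 0 :=
    intervalIntegral.integral_eq_sub_of_hasDerivAt (fun s _ => hΦ' s)
      (hψc.intervalIntegrable 0 h)
  have E2 : ∀ s : ℝ, pdx f (A + s, B + h) - pdx f (A + s, B)
      = ∫ t in (0:ℝ)..h, b (A + s, B + t) := by
    intro s
    have := ftc_y hdx hb (A + s) B 0 h
    rw [this]
    simp
  set N : ℝ := f (z.1 + h/2, z.2 + h/2) - f (z.1 + h/2, z.2 - h/2) - f (z.1 - h/2, z.2 + h/2)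
      + f (z.1 - h/2, z.2 - h/2) with hNdef
  have E3 : N = Φ h - Φ 0 := by
    have e1 : (A + h, B + h) = (z.1 + h/2, z.2 + h/2) := by
      rw [Prod.ext_iff]; constructor <;> (simp [hA, hB]; ring)
    have e2 : (A + h, B) = (z.1 + h/2, z.2 - h/2) := by
      rw [Prod.ext_iff]; constructor <;> simp [hA, hB]; ring
    have e3 : (A + 0, B + h) = (z.1 - h/2, z.2 + h/2) := by
      rw [Prod.ext_iff]; constructor <;> simp [hA, hB]; ring
    have e4 : (A + 0, B) = (z.1 - h/2, z.2 - h/2) := by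
      rw [Prod.ext_iff]; constructor <;> simp [hA, hB]
    simp only [hΦ, hNdef, e1, e2, e3, e4]
    ring
  have hbc2 : Continuous fun w : ℝ × ℝ => b (A + w.1, B + w.2) := by fun_prop
  have Fcont : Continuous fun s : ℝ => ∫ t in (0:ℝ)..h, b (A + s, B + t) :=
    intervalIntegral.continuous_parametric_intervalIntegral_of_continuous'
      (f := fun s t => b (A + s, B + t)) (by exact hbc2) 0 h
  have E4 : N - h ^ 2 * b z = ∫ s in (0:ℝ)..h, ∫ t in (0:ℝ)..h, (b (A + s, B + t) - b z) := by
    have inner_eq : ∀ s : ℝ, ∫ t in (0:ℝ)..h, (b (A + s, B + t) - b z)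
        = (∫ t in (0:ℝ)..h, b (A + s, B + t)) - h * b z := by
      intro s
      have hc1 : Continuous fun t : ℝ => b (A + s, B + t) := by fun_prop
      have hs := intervalIntegral.integral_sub (f := fun t => b (A + s, B + t))
        (g := fun _ => b z) (hc1.intervalIntegrable (μ := MeasureTheory.volume) 0 h)
        ((continuous_const (y := b z)).intervalIntegrable 0 h)
      rw [hs]
      simp
    rw [intervalIntegral.integral_congr (g := fun s =>
      (∫ t in (0:ℝ)..h, b (A + s, B + t)) - h * b z) (fun s _ => inner_eq s)]
    have hs2 := intervalIntegral.integral_sub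
      (f := fun s => ∫ t in (0:ℝ)..h, b (A + s, B + t)) (g := fun _ => h * b z)
      (Fcont.intervalIntegrable (μ := MeasureTheory.volume) 0 h)
      ((continuous_const (y := h * b z)).intervalIntegrable 0 h)
    rw [hs2]
    have : ∫ s in (0:ℝ)..h, ∫ t in (0:ℝ)..h, b (A + s, B + t)
        = ∫ s in (0:ℝ)..h, (pdx f (A + s, B + h) - pdx f (A + s, B)) :=
      intervalIntegral.integral_congr (fun s _ => (E2 s).symm)
    rw [this, E1, ← E3]
    simp
    ring
  have bound : |N - h ^ 2 * b z| ≤ ε * h ^ 2 := by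
    rw [E4]
    have outer : ∀ s ∈ Set.uIoc (0:ℝ) h,
        ‖∫ t in (0:ℝ)..h, (b (A + s, B + t) - b z)‖ ≤ ε * h := by
      intro s hs
      rw [Set.uIoc_of_le hh.le] at hs
      have inner : ∀ t ∈ Set.uIoc (0:ℝ) h, ‖b (A + s, B + t) - b z‖ ≤ ε := by
        intro t ht
        rw [Set.uIoc_of_le hh.le] at ht
        apply hε
        · simp only [hA]
          rw [abs_le]
          constructor <;> [linarith [hs.1]; linarith [hs.2]]
        · simp only [hB]
          rw [abs_le]
          constructor <;> [linarith [ht.1]; linarith [ht.2]]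
      calc ‖∫ t in (0:ℝ)..h, (b (A + s, B + t) - b z)‖
          ≤ ε * |h - 0| := intervalIntegral.norm_integral_le_of_norm_le_const inner
        _ = ε * h := by rw [sub_zero, abs_of_pos hh]
    calc |∫ s in (0:ℝ)..h, ∫ t in (0:ℝ)..h, (b (A + s, B + t) - b z)|
        ≤ (ε * h) * |h - 0| := intervalIntegral.norm_integral_le_of_norm_le_const outer
      _ = ε * h ^ 2 := by rw [sub_zero, abs_of_pos hh]; ring
  have hh2 : (0:ℝ) < h ^ 2 := by positivity
  have : (N / h ^ 2 - b z) = (N - h ^ 2 * b z) / h ^ 2 := by field_simp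
  rw [this, abs_div, abs_of_pos hh2, div_le_iff₀ hh2]
  linarith [bound]

lemma contInner {f : ℝ × ℝ → ℝ} (hf : Continuous f) :
    Continuous fun x => ∫ y in (0:ℝ)..1, f (x, y) :=
  intervalIntegral.continuous_parametric_intervalIntegral_of_continuous'
    (f := fun x y => f (x, y)) (by exact hf) 0 1

lemma torusInt_add {f g : ℝ × ℝ → ℝ} (hf : Continuous f) (hg : Continuous g) :
    torusInt (fun z => f z + g z) = torusInt f + torusInt g := by
  unfold torusInt
  have inner : ∀ x : ℝ, ∫ y in (0:ℝ)..1, (f (x, y) + g (x, y))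
      = (∫ y in (0:ℝ)..1, f (x, y)) + ∫ y in (0:ℝ)..1, g (x, y) := by
    intro x
    exact intervalIntegral.integral_add
      ((hf.comp (by fun_prop)).intervalIntegrable (μ := volume) 0 1)
      ((hg.comp (by fun_prop)).intervalIntegrable 0 1)
  rw [intervalIntegral.integral_congr (fun x _ => inner x)]
  exact intervalIntegral.integral_add
    ((contInner hf).intervalIntegrable (μ := volume) 0 1)
    ((contInner hg).intervalIntegrable 0 1)

lemma torusInt_const_mul (c : ℝ) {f : ℝ × ℝ → ℝ} :
    torusInt (fun z => c * f z) = c * torusInt f := by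
  unfold torusInt
  have inner : ∀ x : ℝ, ∫ y in (0:ℝ)..1, c * f (x, y)
      = c * ∫ y in (0:ℝ)..1, f (x, y) := fun x => intervalIntegral.integral_const_mul c _
  rw [intervalIntegral.integral_congr (fun x _ => inner x)]
  exact intervalIntegral.integral_const_mul c _

lemma torusInt_sub {f g : ℝ × ℝ → ℝ} (hf : Continuous f) (hg : Continuous g) :
    torusInt (fun z => f z - g z) = torusInt f - torusInt g := by
  have h1 : torusInt (fun z => f z + (-1) * g z) = torusInt f + torusInt (fun z => (-1) * g z) :=
    torusInt_add hf (by fun_prop)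
  have h2 : torusInt (fun z => (-1 : ℝ) * g z) = (-1) * torusInt g := torusInt_const_mul (-1)
  have h3 : (fun z => f z - g z) = fun z => f z + (-1) * g z := by funext z; ring
  rw [h3, h1, h2]; ring

lemma torusInt_shift {f : ℝ × ℝ → ℝ} (hf : Continuous f) (hper : Biperiodic f) (s t : ℝ) :
    torusInt (fun z => f (z.1 + s, z.2 + t)) = torusInt f := by
  unfold torusInt
  have inner : ∀ x : ℝ, ∫ y in (0:ℝ)..1, f (x + s, y + t) = ∫ y in (0:ℝ)..1, f (x + s, y) := by
    intro x
    have hp : Function.Periodic (fun y => f (x + s, y)) 1 := fun y => (hper (x + s) y).2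
    rw [intervalIntegral.integral_comp_add_right (fun y => f (x + s, y)) t]
    have := hp.intervalIntegral_add_eq t 0
    simpa [add_comm] using this
  simp only [inner]
  set g : ℝ → ℝ := fun x => ∫ y in (0:ℝ)..1, f (x, y) with hg
  have hgp : Function.Periodic g 1 := by
    intro x
    simp only [hg]
    exact intervalIntegral.integral_congr (fun y _ => (hper x y).1)
  have : ∫ x in (0:ℝ)..1, (fun x => ∫ y in (0:ℝ)..1, f (x + s, y)) x
      = ∫ x in (0:ℝ)..1, g (x + s) := rfl
  rw [this, intervalIntegral.integral_comp_add_right g s]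
  have := hgp.intervalIntegral_add_eq s 0
  simpa [add_comm] using this

lemma torusInt_bound {f : ℝ × ℝ → ℝ} {C : ℝ} (hf : Continuous f)
    (hC : ∀ z : ℝ × ℝ, z.1 ∈ Set.Icc (0:ℝ) 1 → z.2 ∈ Set.Icc (0:ℝ) 1 → |f z| ≤ C) :
    |torusInt f| ≤ C := by
  unfold torusInt
  have inner : ∀ x ∈ Set.uIoc (0:ℝ) 1, ‖∫ y in (0:ℝ)..1, f (x, y)‖ ≤ C := by
    intro x hx
    rw [Set.uIoc_of_le (by norm_num : (0:ℝ) ≤ 1)] at hx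
    have : ∀ y ∈ Set.uIoc (0:ℝ) 1, ‖f (x, y)‖ ≤ C := by
      intro y hy
      rw [Set.uIoc_of_le (by norm_num : (0:ℝ) ≤ 1)] at hy
      exact hC (x, y) ⟨hx.1.le, hx.2⟩ ⟨hy.1.le, hy.2⟩
    calc ‖∫ y in (0:ℝ)..1, f (x, y)‖ ≤ C * |1 - 0| :=
          intervalIntegral.norm_integral_le_of_norm_le_const this
      _ = C := by norm_num
  calc |∫ x in (0:ℝ)..1, ∫ y in (0:ℝ)..1, f (x, y)| ≤ C * |1 - 0| :=
        intervalIntegral.norm_integral_le_of_norm_le_const inner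
    _ = C := by norm_num

lemma Biperiodic.int_shift {f : ℝ × ℝ → ℝ} (hper : Biperiodic f) (x y : ℝ) :
    f (Int.fract x, Int.fract y) = f (x, y) := by
  have hx : Function.Periodic (fun u => f (u, Int.fract y)) 1 := fun u => (hper u _).1
  have hy : Function.Periodic (fun v => f (x, v)) 1 := fun v => (hper x v).2
  have h1 : f (x, Int.fract y) = f (x, y) := by
    have := hy.sub_int_mul_eq (x := y) ⌊y⌋
    simpa [Int.self_sub_floor] using this
  have h2 : f (Int.fract x, Int.fract y) = f (x, Int.fract y) := by
    have := hx.sub_int_mul_eq (x := x) ⌊x⌋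
    simpa [Int.self_sub_floor] using this
  rw [h2, h1]

lemma torusInt_eq_zero_iff {f : ℝ × ℝ → ℝ} (hf : Continuous f) (hper : Biperiodic f)
    (hnn : ∀ z : ℝ × ℝ, 0 ≤ f z) (hJ : torusInt f = 0) : ∀ z : ℝ × ℝ, f z = 0 := by
  by_contra hcon
  push_neg at hcon
  obtain ⟨z₀, hz₀⟩ := hcon
  have hpos : 0 < f z₀ := lt_of_le_of_ne (hnn z₀) (Ne.symm hz₀)
  set x₀ := Int.fract z₀.1
  set y₀ := Int.fract z₀.2
  have hval : f (x₀, y₀) = f z₀ := by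
    rw [hper.int_shift z₀.1 z₀.2]
  have hx₀ : 0 ≤ x₀ ∧ x₀ < 1 := ⟨Int.fract_nonneg _, Int.fract_lt_one _⟩
  have hy₀ : 0 ≤ y₀ ∧ y₀ < 1 := ⟨Int.fract_nonneg _, Int.fract_lt_one _⟩
  set m := f z₀ / 2 with hm
  have hmpos : 0 < m := by positivity
  -- find δ ball where f > m
  have hcont : ContinuousAt f (x₀, y₀) := hf.continuousAt
  rw [Metric.continuousAt_iff] at hcont
  obtain ⟨δ₀, hδ₀, hball⟩ := hcont m hmpos
  set δ := min (min (δ₀ / 2) ((1 - x₀) / 2)) ((1 - y₀) / 2) with hδdef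
  have hδpos : 0 < δ := by
    apply lt_min (lt_min (by positivity) (by simp; linarith [hx₀.2]))
    simp; linarith [hy₀.2]
  have hδx : x₀ + δ ≤ 1 := by
    have : δ ≤ (1 - x₀) / 2 := le_trans (min_le_left _ _) (min_le_right _ _)
    linarith
  have hδy : y₀ + δ ≤ 1 := by
    have : δ ≤ (1 - y₀) / 2 := min_le_right _ _
    linarith
  have hδδ : δ < δ₀ := by
    have : δ ≤ δ₀ / 2 := le_trans (min_le_left _ _) (min_le_left _ _)
    linarith
  have hflow : ∀ w : ℝ × ℝ, w.1 ∈ Set.Icc x₀ (x₀ + δ) → w.2 ∈ Set.Icc y₀ (y₀ + δ) →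
      m ≤ f w := by
    intro w hw1 hw2
    have hd : dist w (x₀, y₀) < δ₀ := by
      rw [Prod.dist_eq]
      apply max_lt <;> (rw [Real.dist_eq, abs_lt]) <;>
        constructor <;> simp at hw1 hw2 ⊢ <;> linarith [hw1.1, hw1.2, hw2.1, hw2.2, hδδ]
    have := hball hd
    rw [Real.dist_eq, abs_lt] at this
    have := this.1
    rw [hval] at this
    rw [hm]
    linarith
  -- inner integral lower bound
  set g : ℝ → ℝ := fun x => ∫ y in (0:ℝ)..1, f (x, y) with hgdef
  have hint : ∀ (x : ℝ) (a b : ℝ), IntervalIntegrable (fun y => f (x, y)) volume a b :=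
    fun x a b => (hf.comp (by fun_prop)).intervalIntegrable a b
  have hg0 : ∀ x, 0 ≤ g x := by
    intro x
    apply intervalIntegral.integral_nonneg (by norm_num)
    intro y _; exact hnn _
  have hglow : ∀ x ∈ Set.Icc x₀ (x₀ + δ), δ * m ≤ g x := by
    intro x hx
    have split1 : g x = (∫ y in (0:ℝ)..y₀, f (x, y)) + ∫ y in y₀..1, f (x, y) := by
      rw [intervalIntegral.integral_add_adjacent_intervals (hint x 0 y₀) (hint x y₀ 1)]
    have split2 : ∫ y in y₀..(1:ℝ), f (x, y)
        = (∫ y in y₀..(y₀ + δ), f (x, y)) + ∫ y in (y₀ + δ)..1, f (x, y) := by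
      rw [intervalIntegral.integral_add_adjacent_intervals (hint x y₀ (y₀ + δ))
        (hint x (y₀ + δ) 1)]
    have h1 : 0 ≤ ∫ y in (0:ℝ)..y₀, f (x, y) :=
      intervalIntegral.integral_nonneg hy₀.1 (fun y _ => hnn _)
    have h2 : 0 ≤ ∫ y in (y₀ + δ)..1, f (x, y) :=
      intervalIntegral.integral_nonneg hδy (fun y _ => hnn _)
    have h3 : δ * m ≤ ∫ y in y₀..(y₀ + δ), f (x, y) := by
      have hmono := intervalIntegral.integral_mono_on (f := fun _ : ℝ => m)
        (g := fun y => f (x, y)) (by linarith : y₀ ≤ y₀ + δ)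
        (intervalIntegrable_const) (hint x y₀ (y₀ + δ))
        (fun y hy => hflow (x, y) hx hy)
      simp only [intervalIntegral.integral_const, smul_eq_mul] at hmono
      calc δ * m ≤ (y₀ + δ - y₀) * m := by ring_nf; rfl
        _ ≤ _ := hmono
    linarith [split1, split2, h1, h2, h3]
  -- outer integral lower bound
  have hJpos : 0 < torusInt f := by
    have hgint : ∀ a b : ℝ, IntervalIntegrable g volume a b :=
      fun a b => (contInner hf).intervalIntegrable a b
    have split1 : torusInt f = (∫ x in (0:ℝ)..x₀, g x) + ∫ x in x₀..1, g x := by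
      have : torusInt f = ∫ x in (0:ℝ)..1, g x := rfl
      rw [this, ← intervalIntegral.integral_add_adjacent_intervals (hgint 0 x₀) (hgint x₀ 1)]
    have split2 : ∫ x in x₀..(1:ℝ), g x
        = (∫ x in x₀..(x₀ + δ), g x) + ∫ x in (x₀ + δ)..1, g x := by
      rw [intervalIntegral.integral_add_adjacent_intervals (hgint x₀ (x₀ + δ))
        (hgint (x₀ + δ) 1)]
    have h1 : 0 ≤ ∫ x in (0:ℝ)..x₀, g x :=
      intervalIntegral.integral_nonneg hx₀.1 (fun x _ => hg0 x)
    have h2 : 0 ≤ ∫ x in (x₀ + δ)..1, g x :=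
      intervalIntegral.integral_nonneg hδx (fun x _ => hg0 x)
    have h3 : δ * (δ * m) ≤ ∫ x in x₀..(x₀ + δ), g x := by
      have hmono := intervalIntegral.integral_mono_on (f := fun _ : ℝ => δ * m)
        (g := g) (by linarith : x₀ ≤ x₀ + δ)
        (intervalIntegrable_const) (hgint x₀ (x₀ + δ))
        (fun x hx => hglow x hx)
      simp only [intervalIntegral.integral_const, smul_eq_mul] at hmono
      calc δ * (δ * m) ≤ (x₀ + δ - x₀) * (δ * m) := by ring_nf; rfl
        _ ≤ _ := hmono
    have : 0 < δ * (δ * m) := by positivity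
    linarith [split1, split2, h1, h2, h3]
  rw [hJ] at hJpos
  exact lt_irrefl 0 hJpos

noncomputable def Du (h : ℝ) (f : ℝ × ℝ → ℝ) : ℝ × ℝ → ℝ :=
  fun z => (f (z.1 + h / 2, z.2) - f (z.1 - h / 2, z.2)) / h
noncomputable def Dv (h : ℝ) (f : ℝ × ℝ → ℝ) : ℝ × ℝ → ℝ :=
  fun z => (f (z.1, z.2 + h / 2) - f (z.1, z.2 - h / 2)) / h

lemma Du_cont {h : ℝ} {f : ℝ × ℝ → ℝ} (hf : Continuous f) : Continuous (Du h f) := by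
  unfold Du; fun_prop
lemma Dv_cont {h : ℝ} {f : ℝ × ℝ → ℝ} (hf : Continuous f) : Continuous (Dv h f) := by
  unfold Dv; fun_prop

lemma Biperiodic.shift {f : ℝ × ℝ → ℝ} (hper : Biperiodic f) (s t : ℝ) :
    Biperiodic (fun z : ℝ × ℝ => f (z.1 + s, z.2 + t)) := by
  intro x y
  constructor
  · show f (x + 1 + s, y + t) = _
    rw [show x + 1 + s = x + s + 1 by ring]
    exact (hper (x + s) (y + t)).1
  · show f (x + s, y + 1 + t) = _
    rw [show y + 1 + t = y + t + 1 by ring]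
    exact (hper (x + s) (y + t)).2

lemma Biperiodic.mul {f g : ℝ × ℝ → ℝ} (hf : Biperiodic f) (hg : Biperiodic g) :
    Biperiodic (fun z => f z * g z) := by
  intro x y
  constructor
  · show f (x+1, y) * g (x+1, y) = _
    rw [(hf x y).1, (hg x y).1]
  · show f (x, y+1) * g (x, y+1) = _
    rw [(hf x y).2, (hg x y).2]

lemma Biperiodic.add {f g : ℝ × ℝ → ℝ} (hf : Biperiodic f) (hg : Biperiodic g) :
    Biperiodic (fun z => f z + g z) := by
  intro x y
  exact ⟨by show f (x+1,y) + g (x+1,y) = _; rw [(hf x y).1, (hg x y).1],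
    by show f (x,y+1) + g (x,y+1) = _; rw [(hf x y).2, (hg x y).2]⟩

lemma Biperiodic.sub {f g : ℝ × ℝ → ℝ} (hf : Biperiodic f) (hg : Biperiodic g) :
    Biperiodic (fun z => f z - g z) := by
  intro x y
  exact ⟨by show f (x+1,y) - g (x+1,y) = _; rw [(hf x y).1, (hg x y).1],
    by show f (x,y+1) - g (x,y+1) = _; rw [(hf x y).2, (hg x y).2]⟩

lemma Biperiodic.du {h : ℝ} {f : ℝ × ℝ → ℝ} (hf : Biperiodic f) : Biperiodic (Du h f) := by
  intro x y
  unfold Du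
  constructor
  · show (f (x + 1 + h/2, y) - f (x + 1 - h/2, y)) / h = _
    rw [show x + 1 + h/2 = x + h/2 + 1 by ring, show x + 1 - h/2 = x - h/2 + 1 by ring,
      (hf (x + h/2) y).1, (hf (x - h/2) y).1]
  · show (f (x + h/2, y + 1) - f (x - h/2, y + 1)) / h = _
    rw [(hf (x + h/2) y).2, (hf (x - h/2) y).2]

lemma Biperiodic.dv {h : ℝ} {f : ℝ × ℝ → ℝ} (hf : Biperiodic f) : Biperiodic (Dv h f) := by
  intro x y
  unfold Dv
  constructor
  · show (f (x + 1, y + h/2) - f (x + 1, y - h/2)) / h = _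
    rw [(hf x (y + h/2)).1, (hf x (y - h/2)).1]
  · show (f (x, y + 1 + h/2) - f (x, y + 1 - h/2)) / h = _
    rw [show y + 1 + h/2 = y + h/2 + 1 by ring, show y + 1 - h/2 = y - h/2 + 1 by ring,
      (hf x (y + h/2)).2, (hf x (y - h/2)).2]

lemma DuDv_comm (h : ℝ) (f : ℝ × ℝ → ℝ) : Du h (Dv h f) = Dv h (Du h f) := by
  funext z
  unfold Du Dv
  ring

lemma torusInt_Du_adj {h : ℝ} {f g : ℝ × ℝ → ℝ} (hf : Continuous f) (hg : Continuous g)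
    (hfp : Biperiodic f) (hgp : Biperiodic g) :
    torusInt (fun z => Du h f z * g z) = - torusInt (fun z => f z * Du h g z) := by
  have move : ∀ s : ℝ, torusInt (fun z => f (z.1 + s, z.2) * g z)
      = torusInt (fun z => f z * g (z.1 - s, z.2)) := by
    intro s
    have H : Continuous fun z : ℝ × ℝ => f (z.1 + s, z.2) * g z := by fun_prop
    have Hp : Biperiodic fun z : ℝ × ℝ => f (z.1 + s, z.2) * g z := by
      have := (hfp.shift s 0).mul hgp
      simpa using this
    have := torusInt_shift H Hp (-s) 0
    have e : (fun z : ℝ × ℝ => (fun z : ℝ × ℝ => f (z.1 + s, z.2) * g z) (z.1 + -s, z.2 + 0))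
        = fun z : ℝ × ℝ => f z * g (z.1 - s, z.2) := by
      funext z
      simp only []
      rw [show z.1 + -s + s = z.1 by ring]
      rw [show z.1 + -s = z.1 - s by ring, show z.2 + (0:ℝ) = z.2 by ring]
    rw [e] at this
    exact this.symm
  have expand1 : (fun z => Du h f z * g z)
      = fun z => (f (z.1 + h/2, z.2) * g z - f (z.1 - h/2, z.2) * g z) / h := by
    funext z; unfold Du; ring
  have expand1' : (fun z => (f (z.1 + h/2, z.2) * g z - f (z.1 - h/2, z.2) * g z) / h)
      = fun z => (1/h) * ((fun z => f (z.1 + h/2, z.2) * g z) z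
          - (fun z => f (z.1 - h/2, z.2) * g z) z) := by
    funext z; simp only []; ring
  have c1 : Continuous fun z : ℝ × ℝ => f (z.1 + h/2, z.2) * g z := by fun_prop
  have c2 : Continuous fun z : ℝ × ℝ => f (z.1 - h/2, z.2) * g z := by fun_prop
  have sub_eq : ∀ z : ℝ × ℝ, z.1 - h/2 = z.1 + -(h/2) := fun z => by ring
  have c2' : (fun z : ℝ × ℝ => f (z.1 - h/2, z.2) * g z)
      = fun z : ℝ × ℝ => f (z.1 + -(h/2), z.2) * g z := by
    funext z; rw [sub_eq z]
  rw [expand1, expand1', torusInt_const_mul, torusInt_sub c1 c2, move (h/2), c2', move (-(h/2))]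
  have e2 : (fun z : ℝ × ℝ => f z * g (z.1 - -(h/2), z.2))
      = fun z : ℝ × ℝ => f z * g (z.1 + h/2, z.2) := by
    funext z; rw [show z.1 - -(h/2) = z.1 + h/2 by ring]
  rw [e2]
  have expand2 : (fun z => f z * Du h g z)
      = fun z => (1/h) * ((fun z => f z * g (z.1 + h/2, z.2)) z
          - (fun z => f z * g (z.1 - h/2, z.2)) z) := by
    funext z; unfold Du; simp only []; ring
  have c3 : Continuous fun z : ℝ × ℝ => f z * g (z.1 + h/2, z.2) := by fun_prop
  have c4 : Continuous fun z : ℝ × ℝ => f z * g (z.1 - h/2, z.2) := by fun_prop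
  rw [expand2, torusInt_const_mul, torusInt_sub c3 c4]
  ring

lemma torusInt_Dv_adj {h : ℝ} {f g : ℝ × ℝ → ℝ} (hf : Continuous f) (hg : Continuous g)
    (hfp : Biperiodic f) (hgp : Biperiodic g) :
    torusInt (fun z => Dv h f z * g z) = - torusInt (fun z => f z * Dv h g z) := by
  have move : ∀ s : ℝ, torusInt (fun z => f (z.1, z.2 + s) * g z)
      = torusInt (fun z => f z * g (z.1, z.2 - s)) := by
    intro s
    have H : Continuous fun z : ℝ × ℝ => f (z.1, z.2 + s) * g z := by fun_prop
    have Hp : Biperiodic fun z : ℝ × ℝ => f (z.1, z.2 + s) * g z := by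
      have := (hfp.shift 0 s).mul hgp
      simpa using this
    have := torusInt_shift H Hp 0 (-s)
    have e : (fun z : ℝ × ℝ => (fun z : ℝ × ℝ => f (z.1, z.2 + s) * g z) (z.1 + 0, z.2 + -s))
        = fun z : ℝ × ℝ => f z * g (z.1, z.2 - s) := by
      funext z
      simp only []
      rw [show z.2 + -s + s = z.2 by ring]
      rw [show z.2 + -s = z.2 - s by ring, show z.1 + (0:ℝ) = z.1 by ring]
    rw [e] at this
    exact this.symm
  have expand1 : (fun z => Dv h f z * g z)
      = fun z => (1/h) * ((fun z => f (z.1, z.2 + h/2) * g z) z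
          - (fun z => f (z.1, z.2 - h/2) * g z) z) := by
    funext z; unfold Dv; simp only []; ring
  have c1 : Continuous fun z : ℝ × ℝ => f (z.1, z.2 + h/2) * g z := by fun_prop
  have c2 : Continuous fun z : ℝ × ℝ => f (z.1, z.2 - h/2) * g z := by fun_prop
  have c2' : (fun z : ℝ × ℝ => f (z.1, z.2 - h/2) * g z)
      = fun z : ℝ × ℝ => f (z.1, z.2 + -(h/2)) * g z := by
    funext z; rw [show z.2 - h/2 = z.2 + -(h/2) by ring]
  rw [expand1, torusInt_const_mul, torusInt_sub c1 c2, move (h/2), c2', move (-(h/2))]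
  have e2 : (fun z : ℝ × ℝ => f z * g (z.1, z.2 - -(h/2)))
      = fun z : ℝ × ℝ => f z * g (z.1, z.2 + h/2) := by
    funext z; rw [show z.2 - -(h/2) = z.2 + h/2 by ring]
  rw [e2]
  have expand2 : (fun z => f z * Dv h g z)
      = fun z => (1/h) * ((fun z => f z * g (z.1, z.2 + h/2)) z
          - (fun z => f z * g (z.1, z.2 - h/2)) z) := by
    funext z; unfold Dv; simp only []; ring
  have c3 : Continuous fun z : ℝ × ℝ => f z * g (z.1, z.2 + h/2) := by fun_prop
  have c4 : Continuous fun z : ℝ × ℝ => f z * g (z.1, z.2 - h/2) := by fun_prop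
  rw [expand2, torusInt_const_mul, torusInt_sub c3 c4]
  ring

lemma move2v {h : ℝ} {φ ψ : ℝ × ℝ → ℝ} (hφ : Continuous φ) (hψ : Continuous ψ)
    (hφp : Biperiodic φ) (hψp : Biperiodic ψ) :
    torusInt (fun z => Dv h (Dv h φ) z * ψ z) = torusInt (fun z => φ z * Dv h (Dv h ψ) z) := by
  rw [torusInt_Dv_adj (Dv_cont hφ) hψ hφp.dv hψp]
  have : torusInt (fun z => Dv h φ z * Dv h ψ z) = - torusInt (fun z => φ z * Dv h (Dv h ψ) z) :=
    torusInt_Dv_adj hφ (Dv_cont hψ) hφp hψp.dv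
  rw [this]; ring

lemma move2u {h : ℝ} {φ ψ : ℝ × ℝ → ℝ} (hφ : Continuous φ) (hψ : Continuous ψ)
    (hφp : Biperiodic φ) (hψp : Biperiodic ψ) :
    torusInt (fun z => Du h (Du h φ) z * ψ z) = torusInt (fun z => φ z * Du h (Du h ψ) z) := by
  rw [torusInt_Du_adj (Du_cont hφ) hψ hφp.du hψp]
  have : torusInt (fun z => Du h φ z * Du h ψ z) = - torusInt (fun z => φ z * Du h (Du h ψ) z) :=
    torusInt_Du_adj hφ (Du_cont hψ) hφp hψp.du
  rw [this]; ring

lemma move2m {h : ℝ} {φ ψ : ℝ × ℝ → ℝ} (hφ : Continuous φ) (hψ : Continuous ψ)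
    (hφp : Biperiodic φ) (hψp : Biperiodic ψ) :
    torusInt (fun z => Du h (Dv h φ) z * ψ z) = torusInt (fun z => φ z * Dv h (Du h ψ) z) := by
  rw [torusInt_Du_adj (Dv_cont hφ) hψ hφp.dv hψp]
  have : torusInt (fun z => Dv h φ z * Du h ψ z) = - torusInt (fun z => φ z * Dv h (Du h ψ) z) :=
    torusInt_Dv_adj hφ (Du_cont hψ) hφp hψp.du
  rw [this]; ring

lemma discrete_null {h : ℝ} {f g : ℝ × ℝ → ℝ} (hf : Continuous f) (hg : Continuous g)
    (hfp : Biperiodic f) (hgp : Biperiodic g) :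
    torusInt (fun z => Dv h (Dv h f) z * Du h (Du h g) z
      - 2 * (Du h (Dv h f) z * Du h (Dv h g) z)
      + Du h (Du h f) z * Dv h (Dv h g) z) = 0 := by
  have c1 : Continuous fun z => Dv h (Dv h f) z * Du h (Du h g) z :=
    (Dv_cont (Dv_cont hf)).mul (Du_cont (Du_cont hg))
  have c2 : Continuous fun z => Du h (Dv h f) z * Du h (Dv h g) z :=
    (Du_cont (Dv_cont hf)).mul (Du_cont (Dv_cont hg))
  have c3 : Continuous fun z => Du h (Du h f) z * Dv h (Dv h g) z :=
    (Du_cont (Du_cont hf)).mul (Dv_cont (Dv_cont hg))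
  have split : torusInt (fun z => Dv h (Dv h f) z * Du h (Du h g) z
      - 2 * (Du h (Dv h f) z * Du h (Dv h g) z)
      + Du h (Du h f) z * Dv h (Dv h g) z)
      = torusInt (fun z => Dv h (Dv h f) z * Du h (Du h g) z)
        - 2 * torusInt (fun z => Du h (Dv h f) z * Du h (Dv h g) z)
        + torusInt (fun z => Du h (Du h f) z * Dv h (Dv h g) z) := by
    rw [torusInt_add (f := fun z => Dv h (Dv h f) z * Du h (Du h g) z
        - 2 * (Du h (Dv h f) z * Du h (Dv h g) z)) (c1.sub (continuous_const.mul c2)) c3,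
      torusInt_sub (g := fun z => 2 * (Du h (Dv h f) z * Du h (Dv h g) z)) c1
        (continuous_const.mul c2),
      torusInt_const_mul 2]
  rw [split]
  have T1 : torusInt (fun z => Dv h (Dv h f) z * Du h (Du h g) z)
      = torusInt (fun z => f z * Dv h (Dv h (Du h (Du h g))) z) :=
    move2v hf (Du_cont (Du_cont hg)) hfp hgp.du.du
  have T2 : torusInt (fun z => Du h (Dv h f) z * Du h (Dv h g) z)
      = torusInt (fun z => f z * Dv h (Du h (Du h (Dv h g))) z) :=
    move2m hf (Du_cont (Dv_cont hg)) hfp hgp.dv.du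
  have T3 : torusInt (fun z => Du h (Du h f) z * Dv h (Dv h g) z)
      = torusInt (fun z => f z * Du h (Du h (Dv h (Dv h g))) z) :=
    move2u hf (Dv_cont (Dv_cont hg)) hfp hgp.dv.dv
  have e1 : Dv h (Dv h (Du h (Du h g))) = Dv h (Du h (Du h (Dv h g))) := by
    congr 1
    rw [← DuDv_comm h (Du h g), ← DuDv_comm h g]
  have e3 : Du h (Du h (Dv h (Dv h g))) = Dv h (Du h (Du h (Dv h g))) := by
    rw [show Du h (Dv h (Dv h g)) = Dv h (Du h (Dv h g)) from DuDv_comm h (Dv h g)]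
    exact DuDv_comm h (Du h (Dv h g))
  rw [T1, T2, T3, e1, e3]
  ring

lemma DuDu_eq (h : ℝ) (f : ℝ × ℝ → ℝ) (z : ℝ × ℝ) :
    Du h (Du h f) z = (f (z.1 + h, z.2) - 2 * f z + f (z.1 - h, z.2)) / h ^ 2 := by
  simp only [Du]
  rw [show z.1 + h/2 + h/2 = z.1 + h by ring, show z.1 + h/2 - h/2 = z.1 by ring,
    show z.1 - h/2 + h/2 = z.1 by ring, show z.1 - h/2 - h/2 = z.1 - h by ring,
    Prod.mk.eta]
  ring

lemma DvDv_eq (h : ℝ) (f : ℝ × ℝ → ℝ) (z : ℝ × ℝ) :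
    Dv h (Dv h f) z = (f (z.1, z.2 + h) - 2 * f z + f (z.1, z.2 - h)) / h ^ 2 := by
  simp only [Dv]
  rw [show z.2 + h/2 + h/2 = z.2 + h by ring, show z.2 + h/2 - h/2 = z.2 by ring,
    show z.2 - h/2 + h/2 = z.2 by ring, show z.2 - h/2 - h/2 = z.2 - h by ring,
    Prod.mk.eta]
  ring

lemma DuDv_eq (h : ℝ) (f : ℝ × ℝ → ℝ) (z : ℝ × ℝ) :
    Du h (Dv h f) z = (f (z.1 + h/2, z.2 + h/2) - f (z.1 + h/2, z.2 - h/2)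
      - f (z.1 - h/2, z.2 + h/2) + f (z.1 - h/2, z.2 - h/2)) / h ^ 2 := by
  simp only [Du, Dv]
  ring

lemma pos_entries {a b c e : ℝ} (h : a * c - b ^ 2 = e) (he : 0 < e) (ht : 0 < a + c) :
    0 < a ∧ 0 < c := by
  constructor <;> nlinarith [sq_nonneg b, sq_nonneg (a - c), sq_nonneg (a + c)]

lemma mat_key {a b c a' b' c' e : ℝ} (h1 : a * c - b ^ 2 = e) (h2 : a' * c' - b' ^ 2 = e)
    (ha : 0 < a) (ha' : 0 < a') :
    a * a' * (c * a' - 2 * b * b' + a * c' - 2 * e)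
      = (a * b' - a' * b) ^ 2 + e * (a - a') ^ 2 := by
  linear_combination (a' ^ 2) * h1 + (a ^ 2) * h2

lemma mat_ineq {a b c a' b' c' e : ℝ} (h1 : a * c - b ^ 2 = e) (h2 : a' * c' - b' ^ 2 = e)
    (he : 0 < e) (ht : 0 < a + c) (ht' : 0 < a' + c') :
    0 ≤ c * a' - 2 * b * b' + a * c' - 2 * e := by
  obtain ⟨ha, hc⟩ := pos_entries h1 he ht
  obtain ⟨ha', hc'⟩ := pos_entries h2 he ht'
  have key := mat_key h1 h2 ha ha'
  nlinarith [sq_nonneg (a * b' - a' * b), sq_nonneg (a - a'), mul_pos ha ha']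

lemma mat_eq {a b c a' b' c' e : ℝ} (h1 : a * c - b ^ 2 = e) (h2 : a' * c' - b' ^ 2 = e)
    (he : 0 < e) (ht : 0 < a + c) (ht' : 0 < a' + c')
    (heq : c * a' - 2 * b * b' + a * c' - 2 * e = 0) :
    a = a' ∧ b = b' ∧ c = c' := by
  obtain ⟨ha, hc⟩ := pos_entries h1 he ht
  obtain ⟨ha', hc'⟩ := pos_entries h2 he ht'
  have key := mat_key h1 h2 ha ha'
  rw [heq, mul_zero] at key
  have hsq : (a - a') ^ 2 = 0 := by nlinarith [sq_nonneg (a * b' - a' * b), sq_nonneg (a - a')]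
  have haa : a = a' := by
    have := pow_eq_zero_iff (n := 2) (by norm_num) |>.mp hsq
    linarith
  have hbb : b = b' := by
    have h2sq : (a * b' - a' * b) ^ 2 = 0 := by nlinarith [sq_nonneg (a - a')]
    have h0 : a * b' - a' * b = 0 := pow_eq_zero_iff (n := 2) (by norm_num) |>.mp h2sq
    rw [← haa] at h0
    have := mul_left_cancel₀ (ne_of_gt ha) (show a * b' = a * b by linarith)
    linarith
  have hcc : c = c' := by
    rw [← haa, ← hbb] at h2
    have := mul_left_cancel₀ (ne_of_gt ha) (show a * c = a * c' by nlinarith)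
    linarith
  exact ⟨haa, hbb, hcc⟩

lemma quad_hasFDerivAt (z : ℝ × ℝ) :
    HasFDerivAt (fun w : ℝ × ℝ => (w.1 ^ 2 + w.2 ^ 2) / 2)
      (z.1 • ContinuousLinearMap.fst ℝ ℝ ℝ + z.2 • ContinuousLinearMap.snd ℝ ℝ ℝ) z := by
  have h1 : HasFDerivAt (fun w : ℝ × ℝ => w.1 * w.1)
      (z.1 • ContinuousLinearMap.fst ℝ ℝ ℝ + z.1 • ContinuousLinearMap.fst ℝ ℝ ℝ) z :=
    (hasFDerivAt_fst (p := z)).mul (hasFDerivAt_fst (p := z))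
  have h2 : HasFDerivAt (fun w : ℝ × ℝ => w.2 * w.2)
      (z.2 • ContinuousLinearMap.snd ℝ ℝ ℝ + z.2 • ContinuousLinearMap.snd ℝ ℝ ℝ) z :=
    (hasFDerivAt_snd (p := z)).mul (hasFDerivAt_snd (p := z))
  have h3 := (h1.add h2).const_smul (R := ℝ) (1/2 : ℝ)
  have e : (fun w : ℝ × ℝ => (w.1 ^ 2 + w.2 ^ 2) / 2)
      = fun w : ℝ × ℝ => (w.1 * w.1 + w.2 * w.2) / 2 := by
    funext w; ring
  have e2 : (fun w : ℝ × ℝ => (w.1 * w.1 + w.2 * w.2) / 2)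
      = fun w : ℝ × ℝ => (1/2 : ℝ) • ((fun w : ℝ × ℝ => w.1 * w.1 + w.2 * w.2) w) := by
    funext w; simp [smul_eq_mul]; ring
  rw [e, e2]
  refine HasFDerivAt.congr_fderiv h3 ?_
  ext w <;> simp <;> ring

lemma pdx_quad_add {p : ℝ × ℝ → ℝ} (hp : Differentiable ℝ p) (z : ℝ × ℝ) :
    pdx (fun w : ℝ × ℝ => (w.1 ^ 2 + w.2 ^ 2) / 2 + p w) z = z.1 + pdx p z := by
  unfold pdx
  have h := (quad_hasFDerivAt z).add (hp z).hasFDerivAt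
  rw [HasFDerivAt.fderiv (f := fun w : ℝ × ℝ => (w.1 ^ 2 + w.2 ^ 2) / 2 + p w) h]
  simp [ContinuousLinearMap.smul_apply]

lemma pdy_quad_add {p : ℝ × ℝ → ℝ} (hp : Differentiable ℝ p) (z : ℝ × ℝ) :
    pdy (fun w : ℝ × ℝ => (w.1 ^ 2 + w.2 ^ 2) / 2 + p w) z = z.2 + pdy p z := by
  unfold pdy
  have h := (quad_hasFDerivAt z).add (hp z).hasFDerivAt
  rw [HasFDerivAt.fderiv (f := fun w : ℝ × ℝ => (w.1 ^ 2 + w.2 ^ 2) / 2 + p w) h]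
  simp [ContinuousLinearMap.smul_apply]

lemma pdx_fst_add {g : ℝ × ℝ → ℝ} (hg : Differentiable ℝ g) (z : ℝ × ℝ) :
    pdx (fun w : ℝ × ℝ => w.1 + g w) z = 1 + pdx g z := by
  unfold pdx
  have h := (hasFDerivAt_fst (p := z)).add (hg z).hasFDerivAt
  rw [HasFDerivAt.fderiv (f := fun w : ℝ × ℝ => w.1 + g w) h]
  simp

lemma pdy_fst_add {g : ℝ × ℝ → ℝ} (hg : Differentiable ℝ g) (z : ℝ × ℝ) :
    pdy (fun w : ℝ × ℝ => w.1 + g w) z = pdy g z := by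
  unfold pdy
  have h := (hasFDerivAt_fst (p := z)).add (hg z).hasFDerivAt
  rw [HasFDerivAt.fderiv (f := fun w : ℝ × ℝ => w.1 + g w) h]
  simp

lemma pdx_snd_add {g : ℝ × ℝ → ℝ} (hg : Differentiable ℝ g) (z : ℝ × ℝ) :
    pdx (fun w : ℝ × ℝ => w.2 + g w) z = pdx g z := by
  unfold pdx
  have h := (hasFDerivAt_snd (p := z)).add (hg z).hasFDerivAt
  rw [HasFDerivAt.fderiv (f := fun w : ℝ × ℝ => w.2 + g w) h]
  simp

lemma pdy_snd_add {g : ℝ × ℝ → ℝ} (hg : Differentiable ℝ g) (z : ℝ × ℝ) :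
    pdy (fun w : ℝ × ℝ => w.2 + g w) z = 1 + pdy g z := by
  unfold pdy
  have h := (hasFDerivAt_snd (p := z)).add (hg z).hasFDerivAt
  rw [HasFDerivAt.fderiv (f := fun w : ℝ × ℝ => w.2 + g w) h]
  simp

lemma pdx_sub {f g : ℝ × ℝ → ℝ} (hf : Differentiable ℝ f) (hg : Differentiable ℝ g)
    (z : ℝ × ℝ) : pdx (fun w => f w - g w) z = pdx f z - pdx g z := by
  unfold pdx
  rw [fderiv_fun_sub (hf z) (hg z)]
  simp

lemma pdy_sub {f g : ℝ × ℝ → ℝ} (hf : Differentiable ℝ f) (hg : Differentiable ℝ g)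
    (z : ℝ × ℝ) : pdy (fun w => f w - g w) z = pdy f z - pdy g z := by
  unfold pdy
  rw [fderiv_fun_sub (hf z) (hg z)]
  simp

lemma basis_decomp (v : ℝ × ℝ) : v = v.1 • ((1:ℝ), (0:ℝ)) + v.2 • ((0:ℝ), (1:ℝ)) := by
  simp [Prod.ext_iff]

lemma r_const {r : ℝ × ℝ → ℝ} (hr : ContDiff ℝ 2 r) (hper : Biperiodic r)
    (huu : ∀ z, pdx (pdx r) z = 0) (hvu : ∀ z, pdy (pdx r) z = 0)
    (hvv : ∀ z, pdy (pdy r) z = 0) : ∀ z, r z = r 0 := by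
  have hd : Differentiable ℝ r := hr.differentiable (by norm_num)
  have hΦ1 : ContDiff ℝ 1 (fderiv ℝ r) := hr.fderiv_right (m := 1) (by norm_num)
  have hΦd : Differentiable ℝ (fderiv ℝ r) := hΦ1.differentiable (by norm_num)
  -- fderiv of applied function
  have happ : ∀ (v : ℝ × ℝ) (z : ℝ × ℝ),
      fderiv ℝ (fun w => fderiv ℝ r w v) z = (fderiv ℝ (fderiv ℝ r) z).flip v := by
    intro v z
    have := fderiv_clm_apply (c := fderiv ℝ r) (u := fun _ => v) (hΦd z)
      (differentiableAt_const v)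
    simpa using this
  have entry : ∀ (u v : ℝ × ℝ) (z : ℝ × ℝ),
      fderiv ℝ (fun w => fderiv ℝ r w v) z u = fderiv ℝ (fderiv ℝ r) z u v := by
    intro u v z
    rw [happ v z]
    rfl
  have huu' : ∀ z, fderiv ℝ (fderiv ℝ r) z (1,0) (1,0) = 0 := by
    intro z
    rw [← entry]
    exact huu z
  have hvu' : ∀ z, fderiv ℝ (fderiv ℝ r) z (0,1) (1,0) = 0 := by
    intro z
    rw [← entry]
    exact hvu z
  have hvv' : ∀ z, fderiv ℝ (fderiv ℝ r) z (0,1) (0,1) = 0 := by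
    intro z
    rw [← entry]
    exact hvv z
  have huv' : ∀ z, fderiv ℝ (fderiv ℝ r) z (1,0) (0,1) = 0 := by
    intro z
    rw [second_derivative_symmetric (fun y => (hd y).hasFDerivAt) ((hΦd z).hasFDerivAt)]
    exact hvu' z
  have hzero : ∀ z, fderiv ℝ (fderiv ℝ r) z = 0 := by
    intro z
    apply ContinuousLinearMap.ext; intro u
    apply ContinuousLinearMap.ext; intro v
    rw [basis_decomp u, basis_decomp v]
    simp only [map_add, _root_.map_smul, ContinuousLinearMap.add_apply,
      ContinuousLinearMap.coe_smul', Pi.smul_apply, smul_eq_mul,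
      ContinuousLinearMap.zero_apply, huu' z, hvu' z, hvv' z, huv' z]
  have hconst : ∀ z, fderiv ℝ r z = fderiv ℝ r 0 :=
    fun z => is_const_of_fderiv_eq_zero hΦd hzero z 0
  set L := fderiv ℝ r 0 with hL
  have hgd : Differentiable ℝ (fun z => r z - L z) := hd.sub L.differentiable
  have hgz : ∀ z, fderiv ℝ (fun w => r w - L w) z = 0 := by
    intro z
    rw [fderiv_fun_sub (hd z) (L.differentiableAt)]
    rw [hconst z, L.fderiv]
    simp
  have hgconst : ∀ z : ℝ × ℝ, r z - L z = r 0 - L 0 :=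
    fun z => is_const_of_fderiv_eq_zero hgd hgz z 0
  have hrz : ∀ z, r z = r 0 + L z := by
    intro z
    have := hgconst z
    simp only [map_zero] at this
    linarith
  have hL10 : L ((1:ℝ), (0:ℝ)) = 0 := by
    have h1 := hrz ((1:ℝ), (0:ℝ))
    have h2 : r ((1:ℝ), (0:ℝ)) = r ((0:ℝ), (0:ℝ)) := by
      have := (hper 0 0).1
      simpa using this
    have h3 : r ((0:ℝ), (0:ℝ)) = r 0 := rfl
    rw [h2, h3] at h1
    linarith
  have hL01 : L ((0:ℝ), (1:ℝ)) = 0 := by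
    have h1 := hrz ((0:ℝ), (1:ℝ))
    have h2 : r ((0:ℝ), (1:ℝ)) = r ((0:ℝ), (0:ℝ)) := by
      have := (hper 0 0).2
      simpa using this
    have h3 : r ((0:ℝ), (0:ℝ)) = r 0 := rfl
    rw [h2, h3] at h1
    linarith
  intro z
  rw [hrz z]
  have : L z = 0 := by
    rw [basis_decomp z, map_add, _root_.map_smul, _root_.map_smul, hL10, hL01]
    simp
  rw [this, add_zero]

lemma torusInt_Du_zero {h : ℝ} {f : ℝ × ℝ → ℝ} (hf : Continuous f) (hper : Biperiodic f) :
    torusInt (Du h f) = 0 := by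
  have e : Du h f = fun z => (1/h) * ((fun z : ℝ × ℝ => f (z.1 + h/2, z.2 + 0)) z
      - (fun z : ℝ × ℝ => f (z.1 + -(h/2), z.2 + 0)) z) := by
    funext z
    simp only [Du, add_zero]
    rw [show z.1 + -(h/2) = z.1 - h/2 by ring]
    ring
  have c1 : Continuous fun z : ℝ × ℝ => f (z.1 + h/2, z.2 + 0) := by fun_prop
  have c2 : Continuous fun z : ℝ × ℝ => f (z.1 + -(h/2), z.2 + 0) := by fun_prop
  rw [e, torusInt_const_mul, torusInt_sub c1 c2, torusInt_shift hf hper (h/2) 0, torusInt_shift hf hper (-(h/2)) 0]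
  ring

lemma torusInt_Dv_zero {h : ℝ} {f : ℝ × ℝ → ℝ} (hf : Continuous f) (hper : Biperiodic f) :
    torusInt (Dv h f) = 0 := by
  have e : Dv h f = fun z => (1/h) * ((fun z : ℝ × ℝ => f (z.1 + 0, z.2 + h/2)) z
      - (fun z : ℝ × ℝ => f (z.1 + 0, z.2 + -(h/2))) z) := by
    funext z
    simp only [Dv, add_zero]
    rw [show z.2 + -(h/2) = z.2 - h/2 by ring]
    ring
  have c1 : Continuous fun z : ℝ × ℝ => f (z.1 + 0, z.2 + h/2) := by fun_prop
  have c2 : Continuous fun z : ℝ × ℝ => f (z.1 + 0, z.2 + -(h/2)) := by fun_prop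
  rw [e, torusInt_const_mul, torusInt_sub c1 c2, torusInt_shift hf hper 0 (h/2), torusInt_shift hf hper 0 (-(h/2))]
  ring

lemma unif_mod {φ : ℝ × ℝ → ℝ} (hφ : Continuous φ) {ε : ℝ} (hε : 0 < ε) :
    ∃ δ : ℝ, 0 < δ ∧ δ ≤ 1 ∧ ∀ z : ℝ × ℝ, z.1 ∈ Set.Icc (0:ℝ) 1 → z.2 ∈ Set.Icc (0:ℝ) 1 →
      ∀ ξ : ℝ × ℝ, |ξ.1 - z.1| ≤ δ → |ξ.2 - z.2| ≤ δ → |φ ξ - φ z| ≤ ε := by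
  set K2 : Set (ℝ × ℝ) := Set.Icc ((-1:ℝ), (-1:ℝ)) ((2:ℝ), (2:ℝ)) with hK2
  have hcomp : IsCompact K2 := isCompact_Icc
  have huc : UniformContinuousOn φ K2 :=
    hcomp.uniformContinuousOn_of_continuous hφ.continuousOn
  rw [Metric.uniformContinuousOn_iff] at huc
  obtain ⟨δ₀, hδ₀, H⟩ := huc ε hε
  refine ⟨min (δ₀/2) 1, by positivity, min_le_right _ _, ?_⟩
  intro z hz1 hz2 ξ hξ1 hξ2
  have hδle : min (δ₀/2) 1 ≤ δ₀ / 2 := min_le_left _ _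
  have hδle1 : min (δ₀/2) 1 ≤ 1 := min_le_right _ _
  have hzK : z ∈ K2 := by
    simp only [hK2, Set.mem_Icc, Prod.le_def]
    simp only [Set.mem_Icc] at hz1 hz2
    constructor <;> constructor <;> linarith [hz1.1, hz1.2, hz2.1, hz2.2]
  have hξK : ξ ∈ K2 := by
    simp only [hK2, Set.mem_Icc, Prod.le_def]
    simp only [Set.mem_Icc] at hz1 hz2
    rw [abs_le] at hξ1 hξ2
    refine ⟨⟨?_, ?_⟩, ?_, ?_⟩ <;>
      linarith [hz1.1, hz1.2, hz2.1, hz2.2, hξ1.1, hξ1.2, hξ2.1, hξ2.2]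
  have hdist : dist ξ z < δ₀ := by
    rw [Prod.dist_eq]
    apply max_lt <;> rw [Real.dist_eq] <;> linarith [hξ1, hξ2, hδ₀]
  have := H ξ hξK z hzK hdist
  rw [Real.dist_eq] at this
  exact this.le


lemma tri_bound {c α W β K ε : ℝ} (hc : |c| ≤ K) (hW : |W| ≤ K) (hα : |α| ≤ ε)
    (hβ : |β| ≤ ε) (hK : 1 ≤ K) (hε1 : ε ≤ 1) (hε0 : 0 ≤ ε) :
    |c * β + α * W + α * β| ≤ 2 * K * ε + ε := by
  have h1 : |c * β + α * W + α * β| ≤ |c * β| + |α * W| + |α * β| := by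
    calc |c * β + α * W + α * β| ≤ |c * β + α * W| + |α * β| := abs_add_le _ _
      _ ≤ |c * β| + |α * W| + |α * β| := by linarith [abs_add_le (c * β) (α * W)]
  rw [abs_mul, abs_mul, abs_mul] at h1
  have m1 : |c| * |β| ≤ K * ε := mul_le_mul hc hβ (abs_nonneg β) (by linarith)
  have m2 : |α| * |W| ≤ ε * K := mul_le_mul hα hW (abs_nonneg W) hε0
  have m3 : |α| * |β| ≤ ε * ε := mul_le_mul hα hβ (abs_nonneg β) hε0
  nlinarith [hε0, hε1]
/-- Uniqueness modulo constants for the Monge–Ampère equation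
`P_uu P_vv - P_uv² = e^F`, `P = ½(u²+v²) + p`, with `p` biperiodic. -/
theorem monge_ampere_uniqueness (F : ℝ × ℝ → ℝ) (hF : Continuous F) (hFper : Biperiodic F)
    (p q : ℝ × ℝ → ℝ)
    (hp : ContDiff ℝ 2 p) (hpper : Biperiodic p)
    (hq : ContDiff ℝ 2 q) (hqper : Biperiodic q)
    (P Q : ℝ × ℝ → ℝ)
    (hP : P = fun z : ℝ × ℝ => (z.1 ^ 2 + z.2 ^ 2) / 2 + p z)
    (hQ : Q = fun z : ℝ × ℝ => (z.1 ^ 2 + z.2 ^ 2) / 2 + q z)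
    (heqP : ∀ z : ℝ × ℝ,
      pdx (pdx P) z * pdy (pdy P) z - (pdy (pdx P) z) ^ 2 = Real.exp (F z))
    (hposP : ∀ z : ℝ × ℝ, 0 < pdx (pdx P) z + pdy (pdy P) z)
    (heqQ : ∀ z : ℝ × ℝ,
      pdx (pdx Q) z * pdy (pdy Q) z - (pdy (pdx Q) z) ^ 2 = Real.exp (F z))
    (hposQ : ∀ z : ℝ × ℝ, 0 < pdx (pdx Q) z + pdy (pdy Q) z) :
    ∃ k : ℝ, ∀ z : ℝ × ℝ, p z - q z = k := by
  classical
  -- basic regularity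
  have hpd : Differentiable ℝ p := hp.differentiable (by norm_num)
  have hqd : Differentiable ℝ q := hq.differentiable (by norm_num)
  have hp1x : ContDiff ℝ 1 (pdx p) := pdx_contDiff (n := 1) (by exact_mod_cast hp)
  have hp1y : ContDiff ℝ 1 (pdy p) := pdy_contDiff (n := 1) (by exact_mod_cast hp)
  have hq1x : ContDiff ℝ 1 (pdx q) := pdx_contDiff (n := 1) (by exact_mod_cast hq)
  have hq1y : ContDiff ℝ 1 (pdy q) := pdy_contDiff (n := 1) (by exact_mod_cast hq)
  have hpxd : Differentiable ℝ (pdx p) := hp1x.differentiable (by norm_num)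
  have hpyd : Differentiable ℝ (pdy p) := hp1y.differentiable (by norm_num)
  have hqxd : Differentiable ℝ (pdx q) := hq1x.differentiable (by norm_num)
  have hqyd : Differentiable ℝ (pdy q) := hq1y.differentiable (by norm_num)
  have cpuu : Continuous (pdx (pdx p)) :=
    (pdx_contDiff (n := 0) (by exact_mod_cast hp1x)).continuous
  have cpuv : Continuous (pdy (pdx p)) :=
    (pdy_contDiff (n := 0) (by exact_mod_cast hp1x)).continuous
  have cpvv : Continuous (pdy (pdy p)) :=
    (pdy_contDiff (n := 0) (by exact_mod_cast hp1y)).continuous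
  have cquu : Continuous (pdx (pdx q)) :=
    (pdx_contDiff (n := 0) (by exact_mod_cast hq1x)).continuous
  have cquv : Continuous (pdy (pdx q)) :=
    (pdy_contDiff (n := 0) (by exact_mod_cast hq1x)).continuous
  have cqvv : Continuous (pdy (pdy q)) :=
    (pdy_contDiff (n := 0) (by exact_mod_cast hq1y)).continuous
  -- second derivatives of P and Q
  have hPx : pdx P = fun w => w.1 + pdx p w := by
    funext w; rw [hP]; exact pdx_quad_add hpd w
  have hPy : pdy P = fun w => w.2 + pdy p w := by
    funext w; rw [hP]; exact pdy_quad_add hpd w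
  have hQx : pdx Q = fun w => w.1 + pdx q w := by
    funext w; rw [hQ]; exact pdx_quad_add hqd w
  have hQy : pdy Q = fun w => w.2 + pdy q w := by
    funext w; rw [hQ]; exact pdy_quad_add hqd w
  have hPxx : ∀ z, pdx (pdx P) z = 1 + pdx (pdx p) z := by
    intro z; rw [hPx]; exact pdx_fst_add hpxd z
  have hPxy : ∀ z, pdy (pdx P) z = pdy (pdx p) z := by
    intro z; rw [hPx]; exact pdy_fst_add hpxd z
  have hPyy : ∀ z, pdy (pdy P) z = 1 + pdy (pdy p) z := by
    intro z; rw [hPy]; exact pdy_snd_add hpyd z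
  have hQxx : ∀ z, pdx (pdx Q) z = 1 + pdx (pdx q) z := by
    intro z; rw [hQx]; exact pdx_fst_add hqxd z
  have hQxy : ∀ z, pdy (pdx Q) z = pdy (pdx q) z := by
    intro z; rw [hQx]; exact pdy_fst_add hqxd z
  have hQyy : ∀ z, pdy (pdy Q) z = 1 + pdy (pdy q) z := by
    intro z; rw [hQy]; exact pdy_snd_add hqyd z
  -- determinant and trace conditions in terms of p and q
  have hdetA : ∀ z, (1 + pdx (pdx p) z) * (1 + pdy (pdy p) z) - (pdy (pdx p) z) ^ 2
      = Real.exp (F z) := by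
    intro z; have := heqP z; rw [hPxx z, hPyy z, hPxy z] at this; exact this
  have hdetB : ∀ z, (1 + pdx (pdx q) z) * (1 + pdy (pdy q) z) - (pdy (pdx q) z) ^ 2
      = Real.exp (F z) := by
    intro z; have := heqQ z; rw [hQxx z, hQyy z, hQxy z] at this; exact this
  have htrA : ∀ z, 0 < (1 + pdx (pdx p) z) + (1 + pdy (pdy p) z) := by
    intro z; have := hposP z; rw [hPxx z, hPyy z] at this; linarith
  have htrB : ∀ z, 0 < (1 + pdx (pdx q) z) + (1 + pdy (pdy q) z) := by
    intro z; have := hposQ z; rw [hQxx z, hQyy z] at this; linarith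
  -- the difference w = q - p
  have hw2 : ContDiff ℝ 2 (fun z => q z - p z) := hq.sub hp
  have hwd : Differentiable ℝ (fun z : ℝ × ℝ => q z - p z) := hqd.sub hpd
  have hwper : Biperiodic (fun z => q z - p z) := hqper.sub hpper
  have hwx : pdx (fun z => q z - p z) = fun z => pdx q z - pdx p z :=
    funext (pdx_sub hqd hpd)
  have hwy : pdy (fun z => q z - p z) = fun z => pdy q z - pdy p z :=
    funext (pdy_sub hqd hpd)
  have hwxx : ∀ z, pdx (pdx (fun z => q z - p z)) z = pdx (pdx q) z - pdx (pdx p) z := by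
    intro z; rw [hwx]; exact pdx_sub hqxd hpxd z
  have hwxy : ∀ z, pdy (pdx (fun z => q z - p z)) z = pdy (pdx q) z - pdy (pdx p) z := by
    intro z; rw [hwx]; exact pdy_sub hqxd hpxd z
  have hwyy : ∀ z, pdy (pdy (fun z => q z - p z)) z = pdy (pdy q) z - pdy (pdy p) z := by
    intro z; rw [hwy]; exact pdy_sub hqyd hpyd z
  have cwuu : Continuous (pdx (pdx (fun z => q z - p z))) := by
    have : pdx (pdx (fun z => q z - p z)) = fun z => pdx (pdx q) z - pdx (pdx p) z :=
      funext hwxx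
    rw [this]; exact cquu.sub cpuu
  have cwuv : Continuous (pdy (pdx (fun z => q z - p z))) := by
    have : pdy (pdx (fun z => q z - p z)) = fun z => pdy (pdx q) z - pdy (pdx p) z :=
      funext hwxy
    rw [this]; exact cquv.sub cpuv
  have cwvv : Continuous (pdy (pdy (fun z => q z - p z))) := by
    have : pdy (pdy (fun z => q z - p z)) = fun z => pdy (pdy q) z - pdy (pdy p) z :=
      funext hwyy
    rw [this]; exact cqvv.sub cpvv
  -- biperiodicity of second partials
  have perpuu : Biperiodic (pdx (pdx p)) := (hpper.pdx hpd).pdx hpxd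
  have perpuv : Biperiodic (pdy (pdx p)) := (hpper.pdx hpd).pdy hpxd
  have perpvv : Biperiodic (pdy (pdy p)) := (hpper.pdy hpd).pdy hpyd
  have perquu : Biperiodic (pdx (pdx q)) := (hqper.pdx hqd).pdx hqxd
  have perquv : Biperiodic (pdy (pdx q)) := (hqper.pdx hqd).pdy hqxd
  have perqvv : Biperiodic (pdy (pdy q)) := (hqper.pdy hqd).pdy hqyd
  -- the key nonnegative function G
  set G : ℝ × ℝ → ℝ := fun z =>
    (1 + pdy (pdy p) z) * (1 + pdx (pdx q) z) - 2 * pdy (pdx p) z * pdy (pdx q) z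
      + (1 + pdx (pdx p) z) * (1 + pdy (pdy q) z) - 2 * Real.exp (F z) with hGdef
  have hGcont : Continuous G := by
    rw [hGdef]
    fun_prop
  have hGper : Biperiodic G := by
    intro x y
    constructor
    · show G ((x+1, y) : ℝ × ℝ) = _
      simp only [hGdef]
      rw [(perpuu x y).1, (perpuv x y).1, (perpvv x y).1, (perquu x y).1, (perquv x y).1,
        (perqvv x y).1, (hFper x y).1]
    · show G ((x, y+1) : ℝ × ℝ) = _
      simp only [hGdef]
      rw [(perpuu x y).2, (perpuv x y).2, (perpvv x y).2, (perquu x y).2, (perquv x y).2,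
        (perqvv x y).2, (hFper x y).2]
  have hGnonneg : ∀ z, 0 ≤ G z := by
    intro z
    have := mat_ineq (hdetA z) (hdetB z) (Real.exp_pos (F z)) (htrA z) (htrB z)
    simp only [hGdef]
    linarith
  -- G equals the "linearized operator applied to w" pointwise
  have hGT : ∀ z, G z =
      (1 + pdy (pdy p) z) * pdx (pdx (fun z => q z - p z)) z
      - 2 * pdy (pdx p) z * pdy (pdx (fun z => q z - p z)) z
      + (1 + pdx (pdx p) z) * pdy (pdy (fun z => q z - p z)) z := by
    intro z
    simp only [hGdef, hwxx z, hwxy z, hwyy z]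
    linear_combination (2 : ℝ) * hdetA z
  -- bounds on the unit square
  have bdd : ∀ φ : ℝ × ℝ → ℝ, Continuous φ → ∃ C : ℝ, ∀ z : ℝ × ℝ,
      z.1 ∈ Set.Icc (0:ℝ) 1 → z.2 ∈ Set.Icc (0:ℝ) 1 → |φ z| ≤ C := by
    intro φ hφ
    obtain ⟨C, hC⟩ := (isCompact_Icc (a := ((0:ℝ), (0:ℝ))) (b := ((1:ℝ), (1:ℝ)))
      ).exists_bound_of_continuousOn hφ.continuousOn
    refine ⟨C, fun z h1 h2 => ?_⟩
    have hz : z ∈ Set.Icc ((0:ℝ), (0:ℝ)) ((1:ℝ), (1:ℝ)) := by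
      simp only [Set.mem_Icc, Prod.le_def] at h1 h2 ⊢
      exact ⟨⟨h1.1, h2.1⟩, h1.2, h2.2⟩
    simpa [Real.norm_eq_abs] using hC z hz
  obtain ⟨K1, hK1⟩ := bdd (fun z => 1 + pdy (pdy p) z) (by fun_prop)
  obtain ⟨K2, hK2⟩ := bdd (pdy (pdx p)) cpuv
  obtain ⟨K3, hK3⟩ := bdd (fun z => 1 + pdx (pdx p) z) (by fun_prop)
  obtain ⟨K4, hK4⟩ := bdd (pdx (pdx (fun z => q z - p z))) cwuu
  obtain ⟨K5, hK5⟩ := bdd (pdy (pdx (fun z => q z - p z))) cwuv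
  obtain ⟨K6, hK6⟩ := bdd (pdy (pdy (fun z => q z - p z))) cwvv
  set K := max 1 (max K1 (max K2 (max K3 (max K4 (max K5 K6))))) with hKdef
  have hK1' : K1 ≤ K := le_trans (le_max_left _ _) (le_max_right _ _)
  have hK2' : K2 ≤ K :=
    le_trans (le_trans (le_max_left _ _) (le_max_right _ _)) (le_max_right _ _)
  have hK3' : K3 ≤ K := le_trans (le_trans (le_trans (le_max_left _ _) (le_max_right _ _))
    (le_max_right _ _)) (le_max_right _ _)
  have hK4' : K4 ≤ K := le_trans (le_trans (le_trans (le_trans (le_max_left _ _)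
    (le_max_right _ _)) (le_max_right _ _)) (le_max_right _ _)) (le_max_right _ _)
  have hK5' : K5 ≤ K := le_trans (le_trans (le_trans (le_trans (le_trans (le_max_left _ _)
    (le_max_right _ _)) (le_max_right _ _)) (le_max_right _ _)) (le_max_right _ _))
    (le_max_right _ _)
  have hK6' : K6 ≤ K := le_trans (le_trans (le_trans (le_trans (le_trans (le_max_right _ _)
    (le_max_right _ _)) (le_max_right _ _)) (le_max_right _ _)) (le_max_right _ _))
    (le_max_right _ _)
  have hKone : 1 ≤ K := le_max_left _ _
  have hpc : Continuous p := hp.continuous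
  have hwc : Continuous (fun z : ℝ × ℝ => q z - p z) := hq.continuous.sub hp.continuous
  -- the main estimate
  have hmain : ∀ ε : ℝ, 0 < ε → ε ≤ 1 → |torusInt G| ≤ (8 * K + 4) * ε := by
    intro ε hε hε1
    obtain ⟨δ1, hδ1pos, _, hδ1⟩ := unif_mod cpvv hε
    obtain ⟨δ2, hδ2pos, _, hδ2⟩ := unif_mod cpuv hε
    obtain ⟨δ3, hδ3pos, _, hδ3⟩ := unif_mod cpuu hε
    obtain ⟨δ4, hδ4pos, _, hδ4⟩ := unif_mod cwuu hε
    obtain ⟨δ5, hδ5pos, _, hδ5⟩ := unif_mod cwuv hε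
    obtain ⟨δ6, hδ6pos, _, hδ6⟩ := unif_mod cwvv hε
    set h := min δ1 (min δ2 (min δ3 (min δ4 (min δ5 δ6)))) with hhdef
    have hhpos : 0 < h :=
      lt_min hδ1pos (lt_min hδ2pos (lt_min hδ3pos (lt_min hδ4pos (lt_min hδ5pos hδ6pos))))
    have hh1 : h ≤ δ1 := min_le_left _ _
    have hh2 : h ≤ δ2 := le_trans (min_le_right _ _) (min_le_left _ _)
    have hh3 : h ≤ δ3 :=
      le_trans (le_trans (min_le_right _ _) (min_le_right _ _)) (min_le_left _ _)
    have hh4 : h ≤ δ4 := le_trans (le_trans (le_trans (min_le_right _ _) (min_le_right _ _))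
      (min_le_right _ _)) (min_le_left _ _)
    have hh5 : h ≤ δ5 := le_trans (le_trans (le_trans (le_trans (min_le_right _ _)
      (min_le_right _ _)) (min_le_right _ _)) (min_le_right _ _)) (min_le_left _ _)
    have hh6 : h ≤ δ6 := le_trans (le_trans (le_trans (le_trans (min_le_right _ _)
      (min_le_right _ _)) (min_le_right _ _)) (min_le_right _ _)) (min_le_right _ _)
    -- continuity of the discrete integrand
    have cI : Continuous (fun z =>
        (1 + Dv h (Dv h p) z) * Du h (Du h (fun z => q z - p z)) z
        - 2 * (Du h (Dv h p) z * Du h (Dv h (fun z => q z - p z)) z)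
        + (1 + Du h (Du h p) z) * Dv h (Dv h (fun z => q z - p z)) z) := by
      have d1 : Continuous (Dv h (Dv h p)) := Dv_cont (Dv_cont hpc)
      have d2 : Continuous (Du h (Du h (fun z : ℝ × ℝ => q z - p z))) := Du_cont (Du_cont hwc)
      have d3 : Continuous (Du h (Dv h p)) := Du_cont (Dv_cont hpc)
      have d4 : Continuous (Du h (Dv h (fun z : ℝ × ℝ => q z - p z))) := Du_cont (Dv_cont hwc)
      have d5 : Continuous (Du h (Du h p)) := Du_cont (Du_cont hpc)
      have d6 : Continuous (Dv h (Dv h (fun z : ℝ × ℝ => q z - p z))) := Dv_cont (Dv_cont hwc)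
      exact (((continuous_const.add d1).mul d2).sub
        (continuous_const.mul (d3.mul d4))).add ((continuous_const.add d5).mul d6)
    -- the exact vanishing of the discrete integral
    have hI0 : torusInt (fun z =>
        (1 + Dv h (Dv h p) z) * Du h (Du h (fun z => q z - p z)) z
        - 2 * (Du h (Dv h p) z * Du h (Dv h (fun z => q z - p z)) z)
        + (1 + Du h (Du h p) z) * Dv h (Dv h (fun z => q z - p z)) z) = 0 := by
      have c1 : Continuous (fun z =>
          Dv h (Dv h p) z * Du h (Du h (fun z => q z - p z)) z
          - 2 * (Du h (Dv h p) z * Du h (Dv h (fun z => q z - p z)) z)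
          + Du h (Du h p) z * Dv h (Dv h (fun z => q z - p z)) z) := by
        have d1 : Continuous (Dv h (Dv h p)) := Dv_cont (Dv_cont hpc)
        have d2 : Continuous (Du h (Du h (fun z : ℝ × ℝ => q z - p z))) := Du_cont (Du_cont hwc)
        have d3 : Continuous (Du h (Dv h p)) := Du_cont (Dv_cont hpc)
        have d4 : Continuous (Du h (Dv h (fun z : ℝ × ℝ => q z - p z))) := Du_cont (Dv_cont hwc)
        have d5 : Continuous (Du h (Du h p)) := Du_cont (Du_cont hpc)
        have d6 : Continuous (Dv h (Dv h (fun z : ℝ × ℝ => q z - p z))) := Dv_cont (Dv_cont hwc)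
        exact ((d1.mul d2).sub (continuous_const.mul (d3.mul d4))).add (d5.mul d6)
      have c2 : Continuous (Du h (Du h (fun z : ℝ × ℝ => q z - p z))) :=
        Du_cont (Du_cont hwc)
      have c3 : Continuous (Dv h (Dv h (fun z : ℝ × ℝ => q z - p z))) :=
        Dv_cont (Dv_cont hwc)
      have e : (fun z =>
          (1 + Dv h (Dv h p) z) * Du h (Du h (fun z => q z - p z)) z
          - 2 * (Du h (Dv h p) z * Du h (Dv h (fun z => q z - p z)) z)
          + (1 + Du h (Du h p) z) * Dv h (Dv h (fun z => q z - p z)) z)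
          = fun z => ((fun z =>
            Dv h (Dv h p) z * Du h (Du h (fun z => q z - p z)) z
            - 2 * (Du h (Dv h p) z * Du h (Dv h (fun z => q z - p z)) z)
            + Du h (Du h p) z * Dv h (Dv h (fun z => q z - p z)) z) z
          + (fun z => Du h (Du h (fun z => q z - p z)) z
              + Dv h (Dv h (fun z => q z - p z)) z) z) := by
        funext z
        simp only []
        ring
      rw [e, torusInt_add (g := fun z => Du h (Du h (fun z => q z - p z)) z
            + Dv h (Dv h (fun z => q z - p z)) z) c1 (c2.add c3), torusInt_add c2 c3]
      rw [discrete_null hpc hwc hpper hwper]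
      have z1 : torusInt (fun z => Du h (Du h (fun z : ℝ × ℝ => q z - p z)) z) = 0 :=
        torusInt_Du_zero (Du_cont hwc) hwper.du
      have z2 : torusInt (fun z => Dv h (Dv h (fun z : ℝ × ℝ => q z - p z)) z) = 0 :=
        torusInt_Dv_zero (Dv_cont hwc) hwper.dv
      rw [z1, z2]
      ring
    -- pointwise approximation bound on the unit square
    have approx : ∀ z : ℝ × ℝ, z.1 ∈ Set.Icc (0:ℝ) 1 → z.2 ∈ Set.Icc (0:ℝ) 1 →
        |G z - ((1 + Dv h (Dv h p) z) * Du h (Du h (fun z => q z - p z)) z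
          - 2 * (Du h (Dv h p) z * Du h (Dv h (fun z => q z - p z)) z)
          + (1 + Du h (Du h p) z) * Dv h (Dv h (fun z => q z - p z)) z)|
          ≤ (8 * K + 4) * ε := by
      intro z hz1 hz2
      have b1 : |Dv h (Dv h p) z - pdy (pdy p) z| ≤ ε := by
        rw [DvDv_eq]
        exact key_v hp z hhpos
          (fun ξ h1 h2 => hδ1 z hz1 hz2 ξ (le_trans h1 hh1) (le_trans h2 hh1))
      have b2 : |Du h (Dv h p) z - pdy (pdx p) z| ≤ ε := by
        rw [DuDv_eq]
        exact key_m hp z hhpos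
          (fun ξ h1 h2 => hδ2 z hz1 hz2 ξ (le_trans h1 hh2) (le_trans h2 hh2))
      have b3 : |Du h (Du h p) z - pdx (pdx p) z| ≤ ε := by
        rw [DuDu_eq]
        exact key_u hp z hhpos
          (fun ξ h1 h2 => hδ3 z hz1 hz2 ξ (le_trans h1 hh3) (le_trans h2 hh3))
      have b4 : |Du h (Du h (fun z => q z - p z)) z - pdx (pdx (fun z => q z - p z)) z| ≤ ε := by
        rw [DuDu_eq]
        exact key_u hw2 z hhpos
          (fun ξ h1 h2 => hδ4 z hz1 hz2 ξ (le_trans h1 hh4) (le_trans h2 hh4))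
      have b5 : |Du h (Dv h (fun z => q z - p z)) z - pdy (pdx (fun z => q z - p z)) z| ≤ ε := by
        rw [DuDv_eq]
        exact key_m hw2 z hhpos
          (fun ξ h1 h2 => hδ5 z hz1 hz2 ξ (le_trans h1 hh5) (le_trans h2 hh5))
      have b6 : |Dv h (Dv h (fun z => q z - p z)) z - pdy (pdy (fun z => q z - p z)) z| ≤ ε := by
        rw [DvDv_eq]
        exact key_v hw2 z hhpos
          (fun ξ h1 h2 => hδ6 z hz1 hz2 ξ (le_trans h1 hh6) (le_trans h2 hh6))
      have k1 : |1 + pdy (pdy p) z| ≤ K := le_trans (hK1 z hz1 hz2) hK1'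
      have k2 : |pdy (pdx p) z| ≤ K := le_trans (hK2 z hz1 hz2) hK2'
      have k3 : |1 + pdx (pdx p) z| ≤ K := le_trans (hK3 z hz1 hz2) hK3'
      have k4 : |pdx (pdx (fun z => q z - p z)) z| ≤ K := le_trans (hK4 z hz1 hz2) hK4'
      have k5 : |pdy (pdx (fun z => q z - p z)) z| ≤ K := le_trans (hK5 z hz1 hz2) hK5'
      have k6 : |pdy (pdy (fun z => q z - p z)) z| ≤ K := le_trans (hK6 z hz1 hz2) hK6'
      rw [hGT z]
      set α1 := Dv h (Dv h p) z - pdy (pdy p) z with hα1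
      set α2 := Du h (Dv h p) z - pdy (pdx p) z with hα2
      set α3 := Du h (Du h p) z - pdx (pdx p) z with hα3
      set β1 := Du h (Du h (fun z => q z - p z)) z - pdx (pdx (fun z => q z - p z)) z with hβ1
      set β2 := Du h (Dv h (fun z => q z - p z)) z - pdy (pdx (fun z => q z - p z)) z with hβ2
      set β3 := Dv h (Dv h (fun z => q z - p z)) z - pdy (pdy (fun z => q z - p z)) z with hβ3
      have expand : ((1 + pdy (pdy p) z) * pdx (pdx (fun z => q z - p z)) z
          - 2 * pdy (pdx p) z * pdy (pdx (fun z => q z - p z)) z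
          + (1 + pdx (pdx p) z) * pdy (pdy (fun z => q z - p z)) z)
          - ((1 + Dv h (Dv h p) z) * Du h (Du h (fun z => q z - p z)) z
          - 2 * (Du h (Dv h p) z * Du h (Dv h (fun z => q z - p z)) z)
          + (1 + Du h (Du h p) z) * Dv h (Dv h (fun z => q z - p z)) z)
          = -((1 + pdy (pdy p) z) * β1 + α1 * pdx (pdx (fun z => q z - p z)) z + α1 * β1)
            + 2 * (pdy (pdx p) z * β2 + α2 * pdy (pdx (fun z => q z - p z)) z + α2 * β2)
            - ((1 + pdx (pdx p) z) * β3 + α3 * pdy (pdy (fun z => q z - p z)) z + α3 * β3)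
          := by
        simp only [hα1, hα2, hα3, hβ1, hβ2, hβ3]
        ring
      rw [expand]
      have t1 := tri_bound k1 k4 b1 b4 hKone hε1 hε.le
      have t2 := tri_bound k2 k5 b2 b5 hKone hε1 hε.le
      have t3 := tri_bound k3 k6 b3 b6 hKone hε1 hε.le
      set X := (1 + pdy (pdy p) z) * β1 + α1 * pdx (pdx (fun z => q z - p z)) z + α1 * β1
      set Y := pdy (pdx p) z * β2 + α2 * pdy (pdx (fun z => q z - p z)) z + α2 * β2
      set Z := (1 + pdx (pdx p) z) * β3 + α3 * pdy (pdy (fun z => q z - p z)) z + α3 * β3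
      have habs : |(-X) + 2 * Y - Z| ≤ |X| + 2 * |Y| + |Z| := by
        calc |(-X) + 2 * Y - Z| = |((-X) + 2 * Y) + (-Z)| := by ring_nf
          _ ≤ |(-X) + 2 * Y| + |(-Z)| := abs_add_le _ _
          _ ≤ |(-X)| + |2 * Y| + |(-Z)| := by linarith [abs_add_le (-X) (2 * Y)]
          _ = |X| + 2 * |Y| + |Z| := by rw [abs_neg, abs_neg, abs_mul]; norm_num
      calc |(-X) + 2 * Y - Z| ≤ |X| + 2 * |Y| + |Z| := habs
        _ ≤ (2 * K * ε + ε) + 2 * (2 * K * ε + ε) + (2 * K * ε + ε) := by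
            have := abs_nonneg Y
            linarith [t1, t2, t3]
        _ = (8 * K + 4) * ε := by ring
    -- combine
    have hGI : torusInt G = torusInt (fun z => G z
        - ((1 + Dv h (Dv h p) z) * Du h (Du h (fun z => q z - p z)) z
          - 2 * (Du h (Dv h p) z * Du h (Dv h (fun z => q z - p z)) z)
          + (1 + Du h (Du h p) z) * Dv h (Dv h (fun z => q z - p z)) z)) := by
      rw [torusInt_sub hGcont cI, hI0, sub_zero]
    rw [hGI]
    exact torusInt_bound (hGcont.sub cI) approx
  -- torusInt G = 0
  have hJG : torusInt G = 0 := by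
    by_contra hne
    have habs : 0 < |torusInt G| := abs_pos.mpr hne
    have hKpos : (0:ℝ) < 8 * K + 4 := by linarith [hKone]
    have hεp : 0 < |torusInt G| / (2 * (8 * K + 4)) := by positivity
    have h1 := hmain (min 1 (|torusInt G| / (2 * (8 * K + 4)))) (lt_min one_pos hεp)
      (min_le_left _ _)
    have h2 : (8 * K + 4) * min 1 (|torusInt G| / (2 * (8 * K + 4)))
        ≤ (8 * K + 4) * (|torusInt G| / (2 * (8 * K + 4))) :=
      mul_le_mul_of_nonneg_left (min_le_right _ _) hKpos.le
    have h3 : (8 * K + 4) * (|torusInt G| / (2 * (8 * K + 4))) = |torusInt G| / 2 := by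
      field_simp
    linarith [h1, h2, h3.le, habs]
  -- G vanishes identically
  have hG0 : ∀ z, G z = 0 := torusInt_eq_zero_iff hGcont hGper hGnonneg hJG
  -- second derivatives agree
  have heq2 : ∀ z : ℝ × ℝ, pdx (pdx p) z = pdx (pdx q) z ∧ pdy (pdx p) z = pdy (pdx q) z
      ∧ pdy (pdy p) z = pdy (pdy q) z := by
    intro z
    have h0 := hG0 z
    simp only [hGdef] at h0
    obtain ⟨e1, e2, e3⟩ := mat_eq (hdetA z) (hdetB z) (Real.exp_pos (F z)) (htrA z) (htrB z)
      (by linarith [h0])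
    exact ⟨by linarith, e2, by linarith⟩
  -- p - q is constant
  have hr2 : ContDiff ℝ 2 (fun z => p z - q z) := hp.sub hq
  have hrper : Biperiodic (fun z => p z - q z) := hpper.sub hqper
  have hrx : pdx (fun z => p z - q z) = fun z => pdx p z - pdx q z := funext (pdx_sub hpd hqd)
  have hry : pdy (fun z => p z - q z) = fun z => pdy p z - pdy q z := funext (pdy_sub hpd hqd)
  have huu0 : ∀ z, pdx (pdx (fun z => p z - q z)) z = 0 := by
    intro z
    rw [hrx, pdx_sub hpxd hqxd z, (heq2 z).1, sub_self]
  have hvu0 : ∀ z, pdy (pdx (fun z => p z - q z)) z = 0 := by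
    intro z
    rw [hrx, pdy_sub hpxd hqxd z, (heq2 z).2.1, sub_self]
  have hvv0 : ∀ z, pdy (pdy (fun z => p z - q z)) z = 0 := by
    intro z
    rw [hry, pdy_sub hpyd hqyd z, (heq2 z).2.2, sub_self]
  have hconst := r_const hr2 hrper huu0 hvu0 hvv0
  exact ⟨p 0 - q 0, fun z => hconst z⟩
end

section
/- Let q : ℝ² → ℝ be a smooth biperiodic function with ∫_{𝕋²} q = 0. Then there exist smooth biperiodic functions a₁, a₂ : ℝ² → ℝ such that ∂a₂/∂x − ∂a₁/∂y = q at every point of ℝ². -/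
open MeasureTheory

section Helpers

open MeasureTheory intervalIntegral
open scoped ContDiff

set_option synthInstance.maxHeartbeats 1000000
set_option maxHeartbeats 2000000

theorem key_deriv {F : Type} [NormedAddCommGroup F] [NormedSpace ℝ F]
    (f : (ℝ × ℝ) × ℝ → F) (hf : ContDiff ℝ ∞ f) (z₀ : ℝ × ℝ) :
    HasFDerivAt (fun z => ∫ t in (0:ℝ)..1, f (z, t))
      (∫ t in (0:ℝ)..1, (fderiv ℝ f (z₀, t)).comp (ContinuousLinearMap.inl ℝ (ℝ × ℝ) ℝ)) z₀ := by
  set g : (ℝ × ℝ) × ℝ → (ℝ × ℝ) →L[ℝ] F :=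
    fun p => (fderiv ℝ f p).comp (ContinuousLinearMap.inl ℝ (ℝ × ℝ) ℝ) with hg_def
  have hgsm : ContDiff ℝ ∞ g := (hf.fderiv_right (by simp)).clm_comp contDiff_const
  have hgc : Continuous g := hgsm.continuous
  have hK : IsCompact ((Metric.closedBall z₀ 1) ×ˢ (Set.Icc (-1:ℝ) 2)) :=
    (isCompact_closedBall _ _).prod isCompact_Icc
  obtain ⟨C, hC⟩ := hK.exists_bound_of_continuousOn hgc.continuousOn
  have hmem : ∀ t ∈ Set.uIoc (0:ℝ) 1, ∀ x ∈ Metric.ball z₀ 1,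
      (x, t) ∈ (Metric.closedBall z₀ 1) ×ˢ (Set.Icc (-1:ℝ) 2) := by
    intro t ht x hx
    rw [Set.uIoc_of_le (by norm_num : (0:ℝ) ≤ 1)] at ht
    exact ⟨Metric.ball_subset_closedBall hx, ⟨by linarith [ht.1], by linarith [ht.2]⟩⟩
  exact intervalIntegral.hasFDerivAt_integral_of_dominated_of_fderiv_le
    (F := fun x t => f (x, t)) (F' := fun x t => g (x, t)) (x₀ := z₀) (a := 0) (b := 1)
    (μ := volume) (bound := fun _ => C) (Metric.ball_mem_nhds z₀ one_pos)
    (Filter.Eventually.of_forall fun x =>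
      (hf.continuous.comp (Continuous.prodMk_right x)).aestronglyMeasurable)
    ((hf.continuous.comp (Continuous.prodMk_right z₀)).intervalIntegrable _ _)
    (hgc.comp (Continuous.prodMk_right z₀)).aestronglyMeasurable
    (Filter.Eventually.of_forall fun t ht x hx => hC _ (hmem t ht x hx))
    intervalIntegrable_const
    (Filter.Eventually.of_forall fun t ht x hx =>
      ((hf.differentiable (by simp) (x, t)).hasFDerivAt).comp x (hasFDerivAt_prodMk_left x t))

theorem key_smooth_n (n : ℕ) :
    ∀ (F : Type) [NormedAddCommGroup F] [NormedSpace ℝ F]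
      (f : (ℝ × ℝ) × ℝ → F), ContDiff ℝ ∞ f →
      ContDiff ℝ (n : WithTop ℕ∞) (fun z => ∫ t in (0:ℝ)..1, f (z, t)) := by
  induction n with
  | zero =>
    intro F _ _ f hf
    rw [Nat.cast_zero, contDiff_zero]
    exact continuous_iff_continuousAt.2 fun z => (key_deriv f hf z).differentiableAt.continuousAt
  | succ n ih =>
    intro F _ _ f hf
    have hgsm : ContDiff ℝ ∞ (fun p : (ℝ × ℝ) × ℝ =>
        (fderiv ℝ f p).comp (ContinuousLinearMap.inl ℝ (ℝ × ℝ) ℝ)) :=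
      (hf.fderiv_right (by simp)).clm_comp contDiff_const
    rw [show ((n + 1 : ℕ) : WithTop ℕ∞) = (n : WithTop ℕ∞) + 1 by push_cast; rfl]
    rw [contDiff_succ_iff_fderiv]
    refine ⟨fun z => (key_deriv f hf z).differentiableAt, by simp, ?_⟩
    have heq : (fderiv ℝ fun z => ∫ t in (0:ℝ)..1, f (z, t)) =
        fun z => ∫ t in (0:ℝ)..1,
          (fderiv ℝ f (z, t)).comp (ContinuousLinearMap.inl ℝ (ℝ × ℝ) ℝ) :=
      funext fun z => (key_deriv f hf z).fderiv
    rw [heq]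
    exact ih _ _ hgsm

theorem key_smooth {F : Type} [NormedAddCommGroup F] [NormedSpace ℝ F]
    (f : (ℝ × ℝ) × ℝ → F) (hf : ContDiff ℝ ∞ f) :
    ContDiff ℝ ∞ (fun z => ∫ t in (0:ℝ)..1, f (z, t)) :=
  contDiff_infty.2 fun n => key_smooth_n n F f hf

end Helpers

/-- A smooth biperiodic function with zero average on the 2-torus can be written as
`∂a₂/∂x - ∂a₁/∂y` with `a₁, a₂` smooth and biperiodic. -/
theorem exact_two_form_on_torus (q : ℝ × ℝ → ℝ)
    (hq : ContDiff ℝ (⊤ : ℕ∞) q) (hper : Biperiodic q)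
    (hint : torusInt q = 0) :
    ∃ a₁ a₂ : ℝ × ℝ → ℝ, ContDiff ℝ (⊤ : ℕ∞) a₁ ∧ Biperiodic a₁ ∧
      ContDiff ℝ (⊤ : ℕ∞) a₂ ∧ Biperiodic a₂ ∧
      ∀ z : ℝ × ℝ, pdx a₂ z - pdy a₁ z = q z := by
  open MeasureTheory intervalIntegral in
  have hq' : ContDiff ℝ ((⊤:ℕ∞) : WithTop ℕ∞) q := hq
  have hqc : Continuous q := hq'.continuous
  have hqcx : ∀ x : ℝ, Continuous (fun t => q (x, t)) :=
    fun x => hqc.comp (Continuous.prodMk_right x)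
  set Q : ℝ → ℝ := fun x => ∫ t in (0:ℝ)..1, q (x, t) with hQdef
  have hQsm : ContDiff ℝ ((⊤:ℕ∞) : WithTop ℕ∞) Q := by
    have h1 := key_smooth (fun p : (ℝ × ℝ) × ℝ => q (p.1.1, p.2))
      (hq'.comp ((contDiff_fst.fst).prodMk contDiff_snd))
    have h2 := h1.comp ((contDiff_id (E := ℝ)).prodMk (contDiff_const (c := (0:ℝ))))
    exact h2
  have hQc : Continuous Q := hQsm.continuous
  have hQper : Function.Periodic Q 1 := by
    intro x
    exact intervalIntegral.integral_congr fun t _ => (hper (x) t).1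
  set A : ℝ → ℝ := fun x => ∫ s in (0:ℝ)..x, Q s with hAdef
  have hA' : ∀ x, HasDerivAt A (Q x) x := fun x =>
    intervalIntegral.integral_hasDerivAt_right (hQc.intervalIntegrable _ _)
      (hQc.stronglyMeasurableAtFilter _ _) hQc.continuousAt
  have hAsm : ContDiff ℝ ((⊤:ℕ∞) : WithTop ℕ∞) A := by
    rw [contDiff_infty_iff_deriv]
    refine ⟨fun x => (hA' x).differentiableAt, ?_⟩
    have : deriv A = Q := funext fun x => (hA' x).deriv
    rw [this]; exact hQsm
  set H : ℝ × ℝ → ℝ := fun z => ∫ t in (0:ℝ)..z.2, q (z.1, t) with hHdef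
  have hHeq : H = fun z : ℝ × ℝ => z.2 • ∫ s in (0:ℝ)..1, q (z.1, z.2 * s) := by
    funext z
    rw [intervalIntegral.smul_integral_comp_mul_left (fun t => q (z.1, t)) z.2]
    simp [hHdef]
  have hHsm : ContDiff ℝ ((⊤:ℕ∞) : WithTop ℕ∞) H := by
    rw [hHeq]
    exact contDiff_snd.smul (key_smooth (fun p : (ℝ × ℝ) × ℝ => q (p.1.1, p.1.2 * p.2))
      (hq'.comp ((contDiff_fst.fst).prodMk ((contDiff_fst.snd).mul contDiff_snd))))
  have hQint : ∫ s in (0:ℝ)..1, Q s = 0 := hint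
  refine ⟨fun z => z.2 * Q z.1 - H z, fun z => A z.1,
    (contDiff_snd.mul (hQsm.comp contDiff_fst)).sub hHsm, ?_, hAsm.comp contDiff_fst, ?_, ?_⟩
  · -- Biperiodic a₁
    intro x y
    constructor
    · simp only [hHdef]
      rw [hQper x]
      have : (∫ t in (0:ℝ)..y, q (x + 1, t)) = ∫ t in (0:ℝ)..y, q (x, t) :=
        intervalIntegral.integral_congr fun t _ => (hper x t).1
      rw [this]
    · have hsplit : (∫ t in (0:ℝ)..y + 1, q (x, t)) =
          (∫ t in (0:ℝ)..y, q (x, t)) + ∫ t in y..y + 1, q (x, t) :=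
        (intervalIntegral.integral_add_adjacent_intervals
          ((hqcx x).intervalIntegrable _ _) ((hqcx x).intervalIntegrable _ _)).symm
      have hp : Function.Periodic (fun t => q (x, t)) 1 := fun t => (hper x t).2
      have hlast : (∫ t in y..y + 1, q (x, t)) = Q x := by
        rw [hp.intervalIntegral_add_eq y 0, zero_add]
      simp only [hHdef]
      rw [hsplit, hlast]
      ring
  · -- Biperiodic a₂
    intro x y
    refine ⟨?_, rfl⟩
    simp only [hAdef]
    have hsplit : (∫ s in (0:ℝ)..x + 1, Q s) =
        (∫ s in (0:ℝ)..x, Q s) + ∫ s in x..x + 1, Q s :=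
      (intervalIntegral.integral_add_adjacent_intervals
        (hQc.intervalIntegrable _ _) (hQc.intervalIntegrable _ _)).symm
    have hlast : (∫ s in x..x + 1, Q s) = 0 := by
      rw [hQper.intervalIntegral_add_eq x 0, zero_add]; exact hQint
    rw [hsplit, hlast, add_zero]
  · -- the PDE
    rintro ⟨x, y⟩
    have hpdx : pdx (fun z : ℝ × ℝ => A z.1) (x, y) = Q x := by
      have hc : HasFDerivAt (fun z : ℝ × ℝ => A z.1)
          ((ContinuousLinearMap.smulRight (1 : ℝ →L[ℝ] ℝ) (Q x)).comp
            (ContinuousLinearMap.fst ℝ ℝ ℝ)) (x, y) := by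
        have h := ((hA' x).hasFDerivAt).comp (x, y) (hasFDerivAt_fst (p := (x, y)) (𝕜 := ℝ))
        have e : ContinuousLinearMap.smulRight (1 : ℝ →L[ℝ] ℝ) (Q x) =
            ContinuousLinearMap.toSpanSingleton ℝ (Q x) := by ext; simp
        rw [e]; exact h
      rw [pdx, hc.fderiv]
      simp
    have hpdy : pdy (fun z : ℝ × ℝ => z.2 * Q z.1 - H z) (x, y) = Q x - q (x, y) := by
      have hdiff : DifferentiableAt ℝ (fun z : ℝ × ℝ => z.2 * Q z.1 - H z) (x, y) :=
        (((contDiff_snd.mul (hQsm.comp contDiff_fst)).sub hHsm).differentiable (by simp)) (x, y)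
      have h1 : HasDerivAt (fun t : ℝ => (fun z : ℝ × ℝ => z.2 * Q z.1 - H z) (x, t))
          (fderiv ℝ (fun z : ℝ × ℝ => z.2 * Q z.1 - H z) (x, y) (0, 1)) y := by
        have hg : HasDerivAt (fun t : ℝ => ((x : ℝ), t)) ((0 : ℝ), (1 : ℝ)) y :=
          (hasDerivAt_const y x).prodMk (hasDerivAt_id y)
        exact hdiff.hasFDerivAt.comp_hasDerivAt y hg
      have h2 : HasDerivAt (fun t : ℝ => (fun z : ℝ × ℝ => z.2 * Q z.1 - H z) (x, t))
          (Q x - q (x, y)) y := by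
        have ha : HasDerivAt (fun t : ℝ => t * Q x) (Q x) y := by
          simpa using (hasDerivAt_id y).mul_const (Q x)
        have hb : HasDerivAt (fun t : ℝ => ∫ s in (0:ℝ)..t, q (x, s)) (q (x, y)) y :=
          intervalIntegral.integral_hasDerivAt_right ((hqcx x).intervalIntegrable _ _)
            ((hqcx x).stronglyMeasurableAtFilter _ _) (hqcx x).continuousAt
        exact ha.sub hb
      rw [pdy, h1.unique h2]
    rw [hpdx, hpdy]
    ring
end

section
/- Let A, B, C, m be real numbers with A > 0 and B ≠ 0, let p : ℝ² → ℝ be a smooth function of the variables (t,z), and define a₃ = (B/A)p_z − (m/A)p and a₄ = p_t + (C/A)p_z. Then at every point of ℝ²: (i) m·a₄ + A·(a₃)_t + C·(a₃)_z − B·(a₄)_z = 0; and (ii) (1 + A·(a₄)_t + C·(a₄)_z)(1 + B·(a₃)_z) − (B·(a₄)_z)² = B²·[ ( (B²+C²)/(A B²) + p_tt − (m C²/(A² B)) p_z )·( A/B² + p_zz − (m/B) p_z ) − ( −C/B² + p_tz + (m C/(A B)) p_z )² ]. -/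
/-- Partial derivative in the first variable `t`. -/
noncomputable def pdt (p : ℝ × ℝ → ℝ) (w : ℝ × ℝ) : ℝ := fderiv ℝ p w (1, 0)

/-- Partial derivative in the second variable `z`. -/
noncomputable def pdz (p : ℝ × ℝ → ℝ) (w : ℝ × ℝ) : ℝ := fderiv ℝ p w (0, 1)

noncomputable def pdv (v : ℝ × ℝ) (p : ℝ × ℝ → ℝ) (w : ℝ × ℝ) : ℝ := fderiv ℝ p w v

lemma pdt_eq (p : ℝ × ℝ → ℝ) : pdt p = pdv (1,0) p := rfl
lemma pdz_eq (p : ℝ × ℝ → ℝ) : pdz p = pdv (0,1) p := rfl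

lemma contDiff_pdv {p : ℝ × ℝ → ℝ} (hp : ContDiff ℝ (⊤ : ℕ∞) p) (v : ℝ × ℝ) :
    ContDiff ℝ (⊤ : ℕ∞) (pdv v p) := by
  have h := hp.fderiv_right (m := (⊤ : ℕ∞)) le_rfl
  exact h.clm_apply contDiff_const

lemma pdv_comm {p : ℝ × ℝ → ℝ} (hp : ContDiff ℝ (⊤ : ℕ∞) p) (u v : ℝ × ℝ) (w : ℝ × ℝ) :
    pdv u (pdv v p) w = pdv v (pdv u p) w := by
  have hd : DifferentiableAt ℝ (fderiv ℝ p) w :=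
    ((hp.fderiv_right (m := (⊤ : ℕ∞)) le_rfl).differentiable (by simp)) w
  have key : ∀ a b : ℝ × ℝ, pdv a (pdv b p) w = fderiv ℝ (fderiv ℝ p) w a b := by
    intro a b
    have : pdv b p = fun y => (fderiv ℝ p y) b := rfl
    rw [pdv, this, fderiv_clm_apply hd (differentiableAt_const b)]
    simp
  rw [key, key]
  exact (hp.contDiffAt.isSymmSndFDerivAt (by rw [minSmoothness_of_isRCLikeNormedField]; norm_cast)) u v

lemma pdv_lin {p q : ℝ × ℝ → ℝ} (hp : ContDiff ℝ (⊤ : ℕ∞) p) (hq : ContDiff ℝ (⊤ : ℕ∞) q)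
    (c d : ℝ) (v w : ℝ × ℝ) :
    pdv v (fun y => c * p y + d * q y) w = c * pdv v p w + d * pdv v q w := by
  have hp' := (hp.differentiable (by simp)) w
  have hq' := (hq.differentiable (by simp)) w
  rw [pdv, fderiv_fun_add ((hp'.const_mul c)) ((hq'.const_mul d)),
    fderiv_const_mul hp' c, fderiv_const_mul hq' d]
  simp [pdv]

/-- Under the substitution `a₃ = (B/A)p_z - (m/A)p`, `a₄ = p_t + (C/A)p_z`, the linear
constraint holds identically, and the Calabi–Yau volume expression reduces to a
generalized Monge–Ampère expression in `p` on the 2-torus base. -/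
theorem calabi_yau_reduction (A B C m : ℝ) (hA : 0 < A) (hB : B ≠ 0)
    (p : ℝ × ℝ → ℝ) (hp : ContDiff ℝ (⊤ : ℕ∞) p)
    (a₃ a₄ : ℝ × ℝ → ℝ)
    (ha₃ : a₃ = fun w => (B / A) * pdz p w - (m / A) * p w)
    (ha₄ : a₄ = fun w => pdt p w + (C / A) * pdz p w) :
    ∀ w : ℝ × ℝ,
      (m * a₄ w + A * pdt a₃ w + C * pdz a₃ w - B * pdz a₄ w = 0) ∧
      ((1 + A * pdt a₄ w + C * pdz a₄ w) * (1 + B * pdz a₃ w) - (B * pdz a₄ w) ^ 2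
        = B ^ 2 *
          (((B ^ 2 + C ^ 2) / (A * B ^ 2) + pdt (pdt p) w
              - (m * C ^ 2 / (A ^ 2 * B)) * pdz p w) *
            (A / B ^ 2 + pdz (pdz p) w - (m / B) * pdz p w) -
          (-(C / B ^ 2) + pdz (pdt p) w + (m * C / (A * B)) * pdz p w) ^ 2)) := by
  intro w
  have hA' : A ≠ 0 := ne_of_gt hA
  have hpz := contDiff_pdv hp (0,1)
  have hpt := contDiff_pdv hp (1,0)
  have ha₃' : a₃ = fun y => (B / A) * pdv (0,1) p y + (-(m / A)) * p y := by
    rw [ha₃]; funext y; rw [pdz_eq]; ring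
  have ha₄' : a₄ = fun y => (1 : ℝ) * pdv (1,0) p y + (C / A) * pdv (0,1) p y := by
    rw [ha₄]; funext y; rw [pdt_eq, pdz_eq]; ring
  have e1 : pdt a₃ w = (B / A) * pdv (1,0) (pdv (0,1) p) w + (-(m / A)) * pdv (1,0) p w := by
    rw [pdt_eq, ha₃']; exact pdv_lin hpz hp _ _ _ w
  have e2 : pdz a₃ w = (B / A) * pdv (0,1) (pdv (0,1) p) w + (-(m / A)) * pdv (0,1) p w := by
    rw [pdz_eq, ha₃']; exact pdv_lin hpz hp _ _ _ w
  have e3 : pdt a₄ w = 1 * pdv (1,0) (pdv (1,0) p) w + (C / A) * pdv (1,0) (pdv (0,1) p) w := by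
    rw [pdt_eq, ha₄']; exact pdv_lin hpt hpz _ _ _ w
  have e4 : pdz a₄ w = 1 * pdv (0,1) (pdv (1,0) p) w + (C / A) * pdv (0,1) (pdv (0,1) p) w := by
    rw [pdz_eq, ha₄']; exact pdv_lin hpt hpz _ _ _ w
  have hsym : pdv (1,0) (pdv (0,1) p) w = pdv (0,1) (pdv (1,0) p) w := pdv_comm hp _ _ w
  constructor
  · rw [e1, e2, e4, ha₄, hsym]
    simp only [pdt_eq, pdz_eq]
    field_simp
    ring
  · rw [e2, e3, e4, hsym]
    show _ = B ^ 2 * (((B ^ 2 + C ^ 2) / (A * B ^ 2) + pdv (1,0) (pdv (1,0) p) w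
              - (m * C ^ 2 / (A ^ 2 * B)) * pdv (0,1) p w) *
            (A / B ^ 2 + pdv (0,1) (pdv (0,1) p) w - (m / B) * pdv (0,1) p w) -
          (-(C / B ^ 2) + pdv (0,1) (pdv (1,0) p) w + (m * C / (A * B)) * pdv (0,1) p w) ^ 2)
    field_simp
    ring
end

section
/- Fix λ ∈ ℝ. Let V = ℝ⁴ with the Chevalley–Eilenberg differential determined by de¹ = 0, de² = λ e¹∧e³, de³ = 0, de⁴ = e¹∧e². Let g be an inner product on V, let J : V → V be a linear map with J∘J = −id and g(JX, JY) = g(X, Y) for all X, Y ∈ V, and let Ω be the 2-form Ω(X,Y) = g(JX, Y). Assume dΩ = 0 and Ω ∧ e¹ ∧ e³ = 0. Then there exists a g-orthonormal basis (f¹, f², f³, f⁴) of V* such that Ω = f¹∧f⁴ + f²∧f³, f¹ ∈ span{e¹}, f² ∈ span{e¹, e³}, and f³ ∈ span{e¹, e³, e²}. -/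
set_option maxRecDepth 8000


/-- The basis covectors `e¹, …, e⁴` of `V*`, viewed as degree-one elements of the
exterior algebra `Λ(V*)`; an element of `Fin 4 → ℝ` is the coefficient vector of a
covector with respect to the basis `e¹, …, e⁴`. -/
noncomputable def E (i : Fin 4) : ExteriorAlgebra ℝ (Fin 4 → ℝ) :=
  ExteriorAlgebra.ι ℝ (Pi.single i 1)

/-- The Chevalley–Eilenberg differential on basis covectors:
`de¹ = 0`, `de² = λ e¹∧e³`, `de³ = 0`, `de⁴ = e¹∧e²`. -/
noncomputable def dE (lam : ℝ) : Fin 4 → ExteriorAlgebra ℝ (Fin 4 → ℝ)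
  | 0 => 0
  | 1 => lam • (E 0 * E 2)
  | 2 => 0
  | 3 => E 0 * E 1

/-- The 2-form `∑_{i<j} c i j e^i ∧ e^j` with coefficients `c`. -/
noncomputable def twoForm (c : Fin 4 → Fin 4 → ℝ) : ExteriorAlgebra ℝ (Fin 4 → ℝ) :=
  ∑ i : Fin 4, ∑ j ∈ Finset.univ.filter (fun j => i < j), c i j • (E i * E j)

/-- The Chevalley–Eilenberg differential of the 2-form `∑_{i<j} c i j e^i ∧ e^j`,
extended from degree one by the Leibniz rule `d(α∧β) = dα∧β - α∧dβ`. -/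
noncomputable def dTwoForm (lam : ℝ) (c : Fin 4 → Fin 4 → ℝ) :
    ExteriorAlgebra ℝ (Fin 4 → ℝ) :=
  ∑ i : Fin 4, ∑ j ∈ Finset.univ.filter (fun j => i < j),
    c i j • (dE lam i * E j - E i * dE lam j)

open ExteriorAlgebra

noncomputable def T3 : (Fin 4 → ℝ) [⋀^Fin 3]→ₗ[ℝ] ℝ :=
  (Matrix.detRowAlternating).compLinearMap (LinearMap.funLeft ℝ ℝ (Fin.castLE (by norm_num)))

noncomputable def F3 : (i : ℕ) → (Fin 4 → ℝ) [⋀^Fin i]→ₗ[ℝ] ℝ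
  | 3 => T3
  | _ => 0

noncomputable def F4 : (i : ℕ) → (Fin 4 → ℝ) [⋀^Fin i]→ₗ[ℝ] ℝ
  | 4 => Matrix.detRowAlternating
  | _ => 0

lemma detRow_eq {n : Type*} [DecidableEq n] [Fintype n] (v : n → n → ℝ) :
    Matrix.detRowAlternating v = Matrix.det (Matrix.of v) := rfl

lemma L3_mul (x y z : Fin 4 → ℝ) :
    liftAlternating F3 (ι ℝ x * (ι ℝ y * ι ℝ z)) =
      x 0 * (y 1 * z 2 - y 2 * z 1) - x 1 * (y 0 * z 2 - y 2 * z 0)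
        + x 2 * (y 0 * z 1 - y 1 * z 0) := by
  rw [liftAlternating_ι_mul, liftAlternating_ι_mul, liftAlternating_ι]
  show ((T3.curryLeft x).curryLeft y) ![z] = _
  simp [T3, detRow_eq, Matrix.det_fin_three, Fin.castLE, Fin.isValue,
    show ((1:Fin 3):ℕ)=1 from rfl]
  ring

lemma L3_mul' (x y z : Fin 4 → ℝ) :
    liftAlternating F3 (ι ℝ x * ι ℝ y * ι ℝ z) =
      x 0 * (y 1 * z 2 - y 2 * z 1) - x 1 * (y 0 * z 2 - y 2 * z 0)
        + x 2 * (y 0 * z 1 - y 1 * z 0) := by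
  rw [mul_assoc]; exact L3_mul x y z

lemma L4_mul (w x y z : Fin 4 → ℝ) :
    liftAlternating F4 (ι ℝ w * (ι ℝ x * (ι ℝ y * ι ℝ z))) =
      Matrix.detRowAlternating ![w, x, y, z] := by
  rw [liftAlternating_ι_mul, liftAlternating_ι_mul, liftAlternating_ι_mul, liftAlternating_ι]
  rfl

lemma L4_mul' (w x y z : Fin 4 → ℝ) :
    liftAlternating F4 (ι ℝ w * ι ℝ x * (ι ℝ y * ι ℝ z)) =
      Matrix.detRowAlternating ![w, x, y, z] := by
  rw [mul_assoc]; exact L4_mul w x y z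

lemma det1302 : Matrix.detRowAlternating
    ![(Pi.single 1 1 : Fin 4 → ℝ), Pi.single 3 1, Pi.single 0 1, Pi.single 2 1] = -1 := by
  rw [detRow_eq]
  simp [Matrix.det_succ_row_zero, Fin.sum_univ_succ, Pi.single_apply, Fin.succAbove]

lemma det0102 : Matrix.detRowAlternating
    ![(Pi.single 0 1 : Fin 4 → ℝ), Pi.single 1 1, Pi.single 0 1, Pi.single 2 1] = 0 :=
  AlternatingMap.map_eq_zero_of_eq _ (i := 0) (j := 2) _ rfl (by decide)
lemma det0202 : Matrix.detRowAlternating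
    ![(Pi.single 0 1 : Fin 4 → ℝ), Pi.single 2 1, Pi.single 0 1, Pi.single 2 1] = 0 :=
  AlternatingMap.map_eq_zero_of_eq _ (i := 0) (j := 2) _ rfl (by decide)
lemma det0302 : Matrix.detRowAlternating
    ![(Pi.single 0 1 : Fin 4 → ℝ), Pi.single 3 1, Pi.single 0 1, Pi.single 2 1] = 0 :=
  AlternatingMap.map_eq_zero_of_eq _ (i := 0) (j := 2) _ rfl (by decide)
lemma det1202 : Matrix.detRowAlternating
    ![(Pi.single 1 1 : Fin 4 → ℝ), Pi.single 2 1, Pi.single 0 1, Pi.single 2 1] = 0 :=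
  AlternatingMap.map_eq_zero_of_eq _ (i := 1) (j := 3) _ rfl (by decide)
lemma det2302 : Matrix.detRowAlternating
    ![(Pi.single 2 1 : Fin 4 → ℝ), Pi.single 3 1, Pi.single 0 1, Pi.single 2 1] = 0 :=
  AlternatingMap.map_eq_zero_of_eq _ (i := 0) (j := 3) _ rfl (by decide)

set_option maxHeartbeats 1000000 in
lemma extract13 (c : Fin 4 → Fin 4 → ℝ) (h : twoForm c * (E 0 * E 2) = 0) : c 1 3 = 0 := by
  have h2 := congrArg (liftAlternating F4) h
  simp only [twoForm, Finset.sum_filter, Fin.sum_univ_four, E, add_mul, smul_mul_assoc,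
    map_add, map_smul, map_zero] at h2
  simp only [show ((0:Fin 4) < 1) = True by simp, show ((0:Fin 4) < 2) = True by simp,
    show ((0:Fin 4) < 3) = True by simp, show ((1:Fin 4) < 2) = True by simp,
    show ((1:Fin 4) < 3) = True by simp, show ((2:Fin 4) < 3) = True by simp,
    show ((0:Fin 4) < 0) = False by simp, show ((1:Fin 4) < 0) = False by simp,
    show ((1:Fin 4) < 1) = False by simp, show ((2:Fin 4) < 0) = False by simp,
    show ((2:Fin 4) < 1) = False by simp, show ((2:Fin 4) < 2) = False by simp,
    show ((3:Fin 4) < 0) = False by simp, show ((3:Fin 4) < 1) = False by simp,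
    show ((3:Fin 4) < 2) = False by simp, show ((3:Fin 4) < 3) = False by simp,
    if_true, if_false, zero_mul, map_zero, zero_add, add_zero, smul_mul_assoc, map_smul,
    L4_mul', det1302, det0102, det0202, det0302, det1202, det2302] at h2
  simpa using h2

set_option maxHeartbeats 1000000 in
lemma extract23 (lam : ℝ) (c : Fin 4 → Fin 4 → ℝ) (h : dTwoForm lam c = 0) : c 2 3 = 0 := by
  have h2 := congrArg (liftAlternating F3) h
  simp only [dTwoForm, Finset.sum_filter, Fin.sum_univ_four, dE, E] at h2
  simp only [show ((0:Fin 4) < 1) = True by simp, show ((0:Fin 4) < 2) = True by simp,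
    show ((0:Fin 4) < 3) = True by simp, show ((1:Fin 4) < 2) = True by simp,
    show ((1:Fin 4) < 3) = True by simp, show ((2:Fin 4) < 3) = True by simp,
    show ((0:Fin 4) < 0) = False by simp, show ((1:Fin 4) < 0) = False by simp,
    show ((1:Fin 4) < 1) = False by simp, show ((2:Fin 4) < 0) = False by simp,
    show ((2:Fin 4) < 1) = False by simp, show ((2:Fin 4) < 2) = False by simp,
    show ((3:Fin 4) < 0) = False by simp, show ((3:Fin 4) < 1) = False by simp,
    show ((3:Fin 4) < 2) = False by simp, show ((3:Fin 4) < 3) = False by simp,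
    if_true, if_false, zero_mul, mul_zero, zero_sub, sub_zero, smul_zero, zero_smul,
    smul_mul_assoc, mul_smul_comm, smul_sub, map_add, map_sub, map_smul, map_zero,
    map_neg, zero_add, add_zero, L3_mul, L3_mul'] at h2
  simp only [Pi.single_apply, show ((0:Fin 4) = 0) = True by simp,
    show ((1:Fin 4) = 0) = False by simp, show ((2:Fin 4) = 0) = False by simp,
    show ((3:Fin 4) = 0) = False by simp, show ((0:Fin 4) = 1) = False by simp,
    show ((1:Fin 4) = 1) = True by simp, show ((2:Fin 4) = 1) = False by simp,
    show ((3:Fin 4) = 1) = False by simp, show ((0:Fin 4) = 2) = False by simp,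
    show ((1:Fin 4) = 2) = False by simp, show ((2:Fin 4) = 2) = True by simp,
    show ((3:Fin 4) = 2) = False by simp, show ((0:Fin 4) = 3) = False by simp,
    show ((1:Fin 4) = 3) = False by simp, show ((2:Fin 4) = 3) = False by simp,
    if_true, if_false] at h2
  norm_num at h2
  linarith [h2]

lemma iota_anticomm (x y : Fin 4 → ℝ) :
    ι ℝ y * ι ℝ x = -(ι ℝ x * ι ℝ y) := by
  have h := ExteriorAlgebra.ι_sq_zero (R := ℝ) (x + y)
  rw [map_add, add_mul, mul_add, mul_add, ExteriorAlgebra.ι_sq_zero,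
    ExteriorAlgebra.ι_sq_zero] at h
  rw [zero_add, add_zero] at h
  exact eq_neg_of_add_eq_zero_right h

lemma E_swap (i j : Fin 4) : E j * E i = -(E i * E j) := iota_anticomm _ _

lemma E_sq (i : Fin 4) : E i * E i = 0 := ExteriorAlgebra.ι_sq_zero _

lemma pi_decomp (X : Fin 4 → ℝ) : X = ∑ k, X k • (Pi.single k 1 : Fin 4 → ℝ) := by
  funext m
  simp [Finset.sum_apply, Pi.single_apply]

lemma exists_ker (L : (Fin 4 → ℝ) →ₗ[ℝ] (Fin 3 → ℝ)) : ∃ x, x ≠ 0 ∧ L x = 0 := by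
  have h : ¬ Function.Injective L := by
    intro hinj
    have h4 := LinearMap.finrank_le_finrank_of_injective hinj
    rw [Module.finrank_fin_fun, Module.finrank_fin_fun] at h4
    omega
  rw [← LinearMap.ker_eq_bot] at h
  obtain ⟨x, hx, hx0⟩ := Submodule.exists_mem_ne_zero_of_ne_bot h
  exact ⟨x, hx0, hx⟩

set_option maxHeartbeats 2000000 in
/-- Filtration lemma: for an almost-Kähler structure `(g, J, Ω)` on the Lie algebra with
structure equations `de¹ = 0`, `de² = λ e¹∧e³`, `de³ = 0`, `de⁴ = e¹∧e²`, whose Kähler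
form is closed and satisfies `Ω ∧ e¹ ∧ e³ = 0`, there is a `g`-orthonormal basis
`(f¹, f², f³, f⁴)` of `V*` with `Ω = f¹∧f⁴ + f²∧f³`, `f¹ ∈ ⟨e¹⟩`, `f² ∈ ⟨e¹,e³⟩`,
`f³ ∈ ⟨e¹,e³,e²⟩`. -/
theorem nil_filtration (lam : ℝ)
    (g : (Fin 4 → ℝ) →ₗ[ℝ] (Fin 4 → ℝ) →ₗ[ℝ] ℝ)
    (hsymm : ∀ X Y : Fin 4 → ℝ, g X Y = g Y X)
    (hposdef : ∀ X : Fin 4 → ℝ, X ≠ 0 → 0 < g X X)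
    (J : (Fin 4 → ℝ) →ₗ[ℝ] (Fin 4 → ℝ))
    (hJ2 : ∀ X : Fin 4 → ℝ, J (J X) = -X)
    (hcompat : ∀ X Y : Fin 4 → ℝ, g (J X) (J Y) = g X Y)
    (Ω : ExteriorAlgebra ℝ (Fin 4 → ℝ))
    (hΩ : Ω = twoForm (fun i j => g (J (Pi.single i 1)) (Pi.single j 1)))
    (hclosed : dTwoForm lam (fun i j => g (J (Pi.single i 1)) (Pi.single j 1)) = 0)
    (hLag : Ω * (E 0 * E 2) = 0) :
    ∃ v f : Fin 4 → (Fin 4 → ℝ),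
      (∀ i j, g (v i) (v j) = if i = j then 1 else 0) ∧
      (∀ i j, (∑ k, f i k * v j k) = if i = j then (1:ℝ) else 0) ∧
      Ω = ExteriorAlgebra.ι ℝ (f 0) * ExteriorAlgebra.ι ℝ (f 3)
          + ExteriorAlgebra.ι ℝ (f 1) * ExteriorAlgebra.ι ℝ (f 2) ∧
      f 0 ∈ Submodule.span ℝ ({Pi.single 0 1} : Set (Fin 4 → ℝ)) ∧
      f 1 ∈ Submodule.span ℝ ({Pi.single 0 1, Pi.single 2 1} : Set (Fin 4 → ℝ)) ∧
      f 2 ∈ Submodule.span ℝ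
        ({Pi.single 0 1, Pi.single 2 1, Pi.single 1 1} : Set (Fin 4 → ℝ)) := by
  classical
  have hc13 : g (J (Pi.single 1 1)) (Pi.single 3 1) = 0 := by
    have := extract13 (fun i j => g (J (Pi.single i 1)) (Pi.single j 1)) (by rw [← hΩ]; exact hLag)
    exact this
  have hc23 : g (J (Pi.single 2 1)) (Pi.single 3 1) = 0 :=
    extract23 lam (fun i j => g (J (Pi.single i 1)) (Pi.single j 1)) hclosed
  -- expansion of g in the second slot
  have hgexp : ∀ w X : Fin 4 → ℝ, g w X = ∑ k, X k * g w (Pi.single k 1) := by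
    intro w X
    conv_lhs => rw [pi_decomp X]
    rw [map_sum]
    simp [smul_eq_mul]
  have hgnd : ∀ w : Fin 4 → ℝ, (∀ k, g w (Pi.single k 1) = 0) → w = 0 := by
    intro w hw
    by_contra h0
    have h1 := hposdef w h0
    have h2 : g w w = 0 := by rw [hgexp]; simp [hw]
    linarith
  have hskew : ∀ X Y : Fin 4 → ℝ, g (J X) Y = -(g (J Y) X) := by
    intro X Y
    calc g (J X) Y = g (J (J X)) (J Y) := (hcompat (J X) Y).symm
      _ = g (-X) (J Y) := by rw [hJ2]
      _ = -(g X (J Y)) := by rw [map_neg]; simp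
      _ = -(g (J Y) X) := by rw [hsymm]
  have hgJ' : ∀ X : Fin 4 → ℝ, g (J X) X = 0 := by
    intro X
    have h := hskew X X
    linarith
  have hJinj : ∀ X : Fin 4 → ℝ, J X = 0 → X = 0 := by
    intro X hX
    have h := hJ2 X
    rw [hX, map_zero] at h
    exact neg_eq_zero.mp h.symm
  -- construction of v1
  obtain ⟨x, hx0, hxk⟩ := exists_ker (LinearMap.pi
    (fun i : Fin 3 => ![g.flip (Pi.single 1 1), g.flip (Pi.single 3 1), g.flip (Pi.single 2 1)] i))
  have hx1 : g x (Pi.single 1 1) = 0 := by have := congrFun hxk 0; simpa using this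
  have hx3 : g x (Pi.single 3 1) = 0 := by have := congrFun hxk 1; simpa using this
  have hx2 : g x (Pi.single 2 1) = 0 := by have := congrFun hxk 2; simpa using this
  have hq1 : 0 < g x x := hposdef x hx0
  set n1 : ℝ := Real.sqrt (g x x) with hn1def
  have hn1 : n1 ≠ 0 := ne_of_gt (Real.sqrt_pos.mpr hq1)
  have hn1sq : n1 * n1 = g x x := Real.mul_self_sqrt hq1.le
  obtain ⟨v1, hv1def⟩ : ∃ w : Fin 4 → ℝ, w = n1⁻¹ • x := ⟨_, rfl⟩
  have hv11 : g v1 (Pi.single 1 1) = 0 := by simp [hv1def, map_smul, hx1]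
  have hv12 : g v1 (Pi.single 2 1) = 0 := by simp [hv1def, map_smul, hx2]
  have hv13 : g v1 (Pi.single 3 1) = 0 := by simp [hv1def, map_smul, hx3]
  have hv1n : g v1 v1 = 1 := by
    have : g v1 v1 = n1⁻¹ * (n1⁻¹ * g x x) := by simp [hv1def, map_smul, smul_eq_mul]
    rw [this, ← hn1sq]
    field_simp
  set a : ℝ := g v1 (Pi.single 0 1) with hadef
  have ha : a ≠ 0 := by
    intro h
    have hz : v1 = 0 := by
      apply hgnd
      intro k
      fin_cases k <;>
        simp only [Fin.zero_eta, Fin.mk_one, show (⟨2, by norm_num⟩ : Fin 4) = 2 from rfl,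
          show (⟨3, by norm_num⟩ : Fin 4) = 3 from rfl]
      · exact h
      · exact hv11
      · exact hv12
      · exact hv13
    rw [hz] at hv1n
    simp at hv1n
  -- J of single 3
  set c03 : ℝ := g (J (Pi.single 0 1)) (Pi.single 3 1) with hc03def
  have hJ3 : J (Pi.single 3 1) = (-(c03 / a)) • v1 := by
    have hw : ∀ k, g (J (Pi.single 3 1) + (c03 / a) • v1) (Pi.single k 1) = 0 := by
      intro k
      rw [map_add, LinearMap.add_apply, map_smul, LinearMap.smul_apply, smul_eq_mul]
      fin_cases k <;>
        simp only [Fin.zero_eta, Fin.mk_one, show (⟨2, by norm_num⟩ : Fin 4) = 2 from rfl,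
          show (⟨3, by norm_num⟩ : Fin 4) = 3 from rfl]
      · rw [hskew]
        show -(c03) + c03 / a * a = 0
        field_simp
        ring
      · rw [hskew, hc13, hv11]; ring
      · rw [hskew, hc23, hv12]; ring
      · rw [hgJ', hv13]; ring
    have h0 := hgnd _ hw
    have := add_eq_zero_iff_eq_neg.mp h0
    rw [this, neg_smul]
  have hc03 : c03 ≠ 0 := by
    intro h
    have h1 : J (Pi.single 3 1) = 0 := by rw [hJ3, h]; simp
    have h2 := hJinj _ h1
    have h3 := congrFun h2 3
    simp at h3
  set t : ℝ := a / c03 with htdef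
  have hJv1 : J v1 = t • (Pi.single 3 1 : Fin 4 → ℝ) := by
    have h1 := congrArg J hJ3
    rw [hJ2, map_smul] at h1
    have hne : (-(c03 / a)) ≠ 0 := by
      simp only [neg_ne_zero, div_ne_zero_iff]
      exact ⟨hc03, ha⟩
    have h2 : (-(c03 / a)) • J v1 = -(Pi.single 3 1 : Fin 4 → ℝ) := h1.symm
    have h3 : J v1 = (-(c03 / a))⁻¹ • (-(Pi.single 3 1 : Fin 4 → ℝ)) := by
      rw [← h2, inv_smul_smul₀ hne]
    rw [h3, smul_neg, ← neg_smul, neg_inv, neg_neg, inv_div]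
  -- construction of v2
  obtain ⟨y, hy0, hyk⟩ := exists_ker (LinearMap.pi
    (fun i : Fin 3 => ![g.flip (Pi.single 1 1), g.flip (Pi.single 3 1), LinearMap.proj 0] i))
  have hy1 : g y (Pi.single 1 1) = 0 := by have := congrFun hyk 0; simpa using this
  have hy3 : g y (Pi.single 3 1) = 0 := by have := congrFun hyk 1; simpa using this
  have hyc0 : y 0 = 0 := by have := congrFun hyk 2; simpa using this
  have hq2 : 0 < g y y := hposdef y hy0
  set n2 : ℝ := Real.sqrt (g y y) with hn2def
  have hn2 : n2 ≠ 0 := ne_of_gt (Real.sqrt_pos.mpr hq2)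
  have hn2sq : n2 * n2 = g y y := Real.mul_self_sqrt hq2.le
  obtain ⟨v2, hv2def⟩ : ∃ w : Fin 4 → ℝ, w = n2⁻¹ • y := ⟨_, rfl⟩
  have hv21 : g v2 (Pi.single 1 1) = 0 := by simp [hv2def, map_smul, hy1]
  have hv23 : g v2 (Pi.single 3 1) = 0 := by simp [hv2def, map_smul, hy3]
  have hv20 : v2 0 = 0 := by simp [hv2def, hyc0]
  have hv2n : g v2 v2 = 1 := by
    have : g v2 v2 = n2⁻¹ * (n2⁻¹ * g y y) := by simp [hv2def, map_smul, smul_eq_mul]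
    rw [this, ← hn2sq]
    field_simp
  -- orthogonality facts
  have hg12 : g v1 v2 = 0 := by
    rw [hgexp v1 v2, Fin.sum_univ_four, hv20, hv11, hv12, hv13]
    ring
  have hg21 : g v2 v1 = 0 := by rw [hsymm]; exact hg12
  have hJv1v2 : g (J v1) v2 = 0 := by
    rw [hJv1, map_smul, LinearMap.smul_apply, smul_eq_mul, hsymm, hv23, mul_zero]
  have hJv2v1 : g (J v2) v1 = 0 := by rw [hskew, hJv1v2, neg_zero]
  have hJv1Jv2 : g (J v1) (J v2) = 0 := by rw [hcompat]; exact hg12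
  have hJv2Jv1 : g (J v2) (J v1) = 0 := by rw [hcompat]; exact hg21
  have hJv1Jv1 : g (J v1) (J v1) = 1 := by rw [hcompat]; exact hv1n
  have hJv2Jv2 : g (J v2) (J v2) = 1 := by rw [hcompat]; exact hv2n
  have hv1Jv1 : g v1 (J v1) = 0 := by rw [hsymm]; exact hgJ' v1
  have hv2Jv2 : g v2 (J v2) = 0 := by rw [hsymm]; exact hgJ' v2
  have hv1Jv2 : g v1 (J v2) = 0 := by rw [hsymm]; exact hJv2v1
  have hv2Jv1 : g v2 (J v1) = 0 := by rw [hsymm]; exact hJv1v2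
  set v : Fin 4 → (Fin 4 → ℝ) := ![v1, v2, J v2, J v1] with hvdef
  set f : Fin 4 → (Fin 4 → ℝ) := fun i k => g (v i) (Pi.single k 1) with hfdef
  have hON : ∀ i j, g (v i) (v j) = if i = j then (1:ℝ) else 0 := by
    intro i j
    fin_cases i <;> fin_cases j <;>
      simp only [hvdef, Fin.zero_eta, Fin.mk_one, show (⟨2, by norm_num⟩ : Fin 4) = 2 from rfl,
        show (⟨3, by norm_num⟩ : Fin 4) = 3 from rfl, Matrix.cons_val_zero, Matrix.cons_val_one,
        Matrix.head_cons, Matrix.cons_val_two, Matrix.tail_cons, Matrix.cons_val_three] <;>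
      norm_num <;>
      first
        | exact hv1n
        | exact hv2n
        | exact hJv1Jv1
        | exact hJv2Jv2
        | exact hg12
        | exact hg21
        | exact hv1Jv2
        | exact hv1Jv1
        | exact hv2Jv2
        | exact hv2Jv1
        | exact hJv2v1
        | exact hJv1v2
        | exact hJv2Jv1
        | exact hJv1Jv2
        | exact hgJ' v1
        | exact hgJ' v2
  have hdual : ∀ i j, (∑ k, f i k * v j k) = if i = j then (1:ℝ) else 0 := by
    intro i j
    have h1 : (∑ k, f i k * v j k) = g (v i) (v j) := by
      rw [hgexp (v i) (v j)]
      exact Finset.sum_congr rfl fun k _ => by rw [hfdef]; ring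
    rw [h1, hON]
  -- linear independence and completeness
  have hli : LinearIndependent ℝ v := by
    rw [Fintype.linearIndependent_iff]
    intro cc hcc i
    have h1 := congrArg (fun X => g X (v i)) hcc
    simp only [map_sum, LinearMap.sum_apply, map_smul, LinearMap.smul_apply, smul_eq_mul,
      map_zero, LinearMap.zero_apply, hON] at h1
    simpa [mul_ite, Finset.sum_ite_eq'] using h1
  have hcard : Fintype.card (Fin 4) = Module.finrank ℝ (Fin 4 → ℝ) := by
    simp [Module.finrank_fin_fun]
  have hexpand : ∀ X : Fin 4 → ℝ, X = ∑ i, g X (v i) • v i := by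
    intro X
    set B := basisOfLinearIndependentOfCardEqFinrank hli hcard with hBdef
    have hB : ∀ i, B i = v i := fun i => by
      rw [hBdef, coe_basisOfLinearIndependentOfCardEqFinrank]
    have hs := B.sum_repr X
    have hcoef : ∀ j, (B.repr X) j = g X (v j) := by
      intro j
      have h1 := congrArg (fun Y => g Y (v j)) hs
      simp only [map_sum, LinearMap.sum_apply, map_smul, LinearMap.smul_apply, smul_eq_mul,
        hB, hON] at h1
      simpa [mul_ite, Finset.sum_ite_eq'] using h1
    conv_lhs => rw [← hs]
    exact Finset.sum_congr rfl fun i _ => by rw [hcoef, hB]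
  -- the table of Ω on the basis v, and the bilinear identity
  have hW : ∀ X Y : Fin 4 → ℝ, g (J X) Y =
      g X (v 0) * g Y (v 3) - g X (v 3) * g Y (v 0)
        + g X (v 1) * g Y (v 2) - g X (v 2) * g Y (v 1) := by
    intro X Y
    conv_lhs => rw [hexpand X, hexpand Y]
    rw [map_sum, map_sum]
    simp only [LinearMap.sum_apply, map_smul, LinearMap.smul_apply, map_sum, smul_eq_mul,
      Finset.mul_sum]
    rw [Fin.sum_univ_four]
    simp only [Fin.sum_univ_four]
    simp only [hvdef, Matrix.cons_val_zero, Matrix.cons_val_one, Matrix.head_cons,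
      Matrix.cons_val_two, Matrix.tail_cons, Matrix.cons_val_three]
    simp only [hJ2, map_neg, LinearMap.neg_apply, hgJ' v1, hgJ' v2, hJv1v2, hJv2v1,
      hJv1Jv2, hJv2Jv1, hJv1Jv1, hJv2Jv2, hg12, hg21, hv1Jv1, hv2Jv2, hv1Jv2, hv2Jv1,
      hv1n, hv2n]
    ring
  have hcoefid : ∀ i j : Fin 4, g (J (Pi.single i 1)) (Pi.single j 1) =
      f 0 i * f 3 j - f 3 i * f 0 j + f 1 i * f 2 j - f 2 i * f 1 j := by
    intro i j
    rw [hW (Pi.single i 1) (Pi.single j 1)]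
    simp only [hfdef]
    rw [hsymm (Pi.single i 1) (v 0), hsymm (Pi.single i 1) (v 1), hsymm (Pi.single i 1) (v 2),
      hsymm (Pi.single i 1) (v 3), hsymm (Pi.single j 1) (v 0), hsymm (Pi.single j 1) (v 1),
      hsymm (Pi.single j 1) (v 2), hsymm (Pi.single j 1) (v 3)]
  have hve0 : v 0 = v1 := by simp [hvdef]
  have hve1 : v 1 = v2 := by simp [hvdef]
  have hve2 : v 2 = J v2 := by simp [hvdef]
  have hve3 : v 3 = J v1 := by simp [hvdef]
  refine ⟨v, f, hON, hdual, ?_, ?_, ?_, ?_⟩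
  · -- the Kähler form identity
    rw [hΩ]
    have hiota : ∀ X : Fin 4 → ℝ, ι ℝ X = ∑ k, X k • E k := by
      intro X
      conv_lhs => rw [pi_decomp X]
      rw [map_sum]
      simp only [map_smul, E]
    rw [hiota (f 0), hiota (f 3), hiota (f 1), hiota (f 2), twoForm]
    simp only [Finset.sum_filter, Fin.sum_univ_four, add_mul, mul_add,
      smul_mul_assoc, mul_smul_comm, smul_smul]
    try simp only [show ((0:Fin 4) < 1) = True by simp, show ((0:Fin 4) < 2) = True by simp,
      show ((0:Fin 4) < 3) = True by simp, show ((1:Fin 4) < 2) = True by simp,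
      show ((1:Fin 4) < 3) = True by simp, show ((2:Fin 4) < 3) = True by simp,
      show ((0:Fin 4) < 0) = False by simp, show ((1:Fin 4) < 0) = False by simp,
      show ((1:Fin 4) < 1) = False by simp, show ((2:Fin 4) < 0) = False by simp,
      show ((2:Fin 4) < 1) = False by simp, show ((2:Fin 4) < 2) = False by simp,
      show ((3:Fin 4) < 0) = False by simp, show ((3:Fin 4) < 1) = False by simp,
      show ((3:Fin 4) < 2) = False by simp, show ((3:Fin 4) < 3) = False by simp,
      if_true, if_false, zero_smul, zero_add, add_zero]
    simp only [E_sq, E_swap 0 1, E_swap 0 2, E_swap 0 3, E_swap 1 2, E_swap 1 3, E_swap 2 3,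
      smul_zero, smul_neg]
    rw [hcoefid 0 1, hcoefid 0 2, hcoefid 0 3, hcoefid 1 2, hcoefid 1 3, hcoefid 2 3]
    module
  · -- f 0 spans
    have h0 : f 0 = a • (Pi.single 0 1 : Fin 4 → ℝ) := by
      funext k
      rw [hfdef]
      simp only [hve0]
      fin_cases k <;>
        simp only [Fin.zero_eta, Fin.mk_one, show (⟨2, by norm_num⟩ : Fin 4) = 2 from rfl,
          show (⟨3, by norm_num⟩ : Fin 4) = 3 from rfl, Pi.smul_apply, smul_eq_mul]
      · rw [← hadef]
        simp
      · rw [hv11]; simp [Pi.single_apply]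
      · rw [hv12]; simp [Pi.single_apply]
      · rw [hv13]; simp [Pi.single_apply]
    rw [h0]
    exact Submodule.smul_mem _ _ (Submodule.mem_span_singleton_self _)
  · -- f 1 spans
    have h1 : f 1 = g v2 (Pi.single 0 1) • (Pi.single 0 1 : Fin 4 → ℝ)
        + g v2 (Pi.single 2 1) • (Pi.single 2 1 : Fin 4 → ℝ) := by
      funext k
      rw [hfdef]
      simp only [hve1]
      fin_cases k <;>
        simp only [Fin.zero_eta, Fin.mk_one, show (⟨2, by norm_num⟩ : Fin 4) = 2 from rfl,
          show (⟨3, by norm_num⟩ : Fin 4) = 3 from rfl, Pi.add_apply, Pi.smul_apply,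
          smul_eq_mul]
      · simp [Pi.single_apply]
      · rw [hv21]; simp [Pi.single_apply]
      · simp [Pi.single_apply]
      · rw [hv23]; simp [Pi.single_apply]
    rw [h1]
    exact Submodule.mem_span_pair.mpr ⟨_, _, rfl⟩
  · -- f 2 spans
    have hf23 : g (J v2) (Pi.single 3 1) = 0 := by
      rw [hskew, hJ3, map_smul, LinearMap.smul_apply, smul_eq_mul, hg12]
      ring
    have h2 : f 2 = g (J v2) (Pi.single 0 1) • (Pi.single 0 1 : Fin 4 → ℝ)
        + g (J v2) (Pi.single 2 1) • (Pi.single 2 1 : Fin 4 → ℝ)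
        + g (J v2) (Pi.single 1 1) • (Pi.single 1 1 : Fin 4 → ℝ) := by
      funext k
      rw [hfdef]
      simp only [hve2]
      fin_cases k <;>
        simp only [Fin.zero_eta, Fin.mk_one, show (⟨2, by norm_num⟩ : Fin 4) = 2 from rfl,
          show (⟨3, by norm_num⟩ : Fin 4) = 3 from rfl, Pi.add_apply, Pi.smul_apply,
          smul_eq_mul]
      · simp [Pi.single_apply]
      · simp [Pi.single_apply]
      · simp [Pi.single_apply]
      · rw [hf23]; simp [Pi.single_apply]
    rw [h2]
    refine Submodule.add_mem _ (Submodule.add_mem _ ?_ ?_) ?_ <;>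
      refine Submodule.smul_mem _ _ (Submodule.subset_span ?_) <;>
      simp
end
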